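/- arXiv:2311.16049 — 2 statements merged into one kernel-verified Lean document; each statement's English description precedes it below -/
import Mathlib

section
/- The functions f_E, f_A, f_I are well defined (the improper integrals converge), differentiable on ℝ≥0, and satisfy for all θ ≥ 0: f_E'(θ) = (k(θ)+μ)·f_E(θ) − f_A(0)·k(θ)q(θ) − f_I(0)·k(θ)(1−q(θ)); f_A'(θ) = (γ_A(θ)ξ(θ)+χ(θ)(1−ξ(θ))+μ)·f_A(θ) − f_I(0)·χ(θ)(1−ξ(θ)) − M·β_A(θ); f_I'(θ) = (γ_I(θ)+μ)·f_I(θ) − M·β_I(θ). -/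
open MeasureTheory Filter

noncomputable section

/-- Survival kernel of the exposed class: `π_E(θ) = exp(−∫₀^θ (k(τ)+μ) dτ)`. -/
def piE (μ : ℝ) (k : ℝ → ℝ) (θ : ℝ) : ℝ :=
  Real.exp (-(∫ τ in (0:ℝ)..θ, (k τ + μ)))

/-- Survival kernel of the asymptomatic class:
`π_A(θ) = exp(−∫₀^θ (γ_A ξ + χ(1−ξ) + μ) dτ)`. -/
def piA (μ : ℝ) (γA ξ χ : ℝ → ℝ) (θ : ℝ) : ℝ :=
  Real.exp (-(∫ τ in (0:ℝ)..θ, (γA τ * ξ τ + χ τ * (1 - ξ τ) + μ)))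

/-- Survival kernel of the symptomatic class: `π_I(θ) = exp(−∫₀^θ (γ_I(τ)+μ) dτ)`. -/
def piI (μ : ℝ) (γI : ℝ → ℝ) (θ : ℝ) : ℝ :=
  Real.exp (-(∫ τ in (0:ℝ)..θ, (γI τ + μ)))

/-- An essentially bounded measurable nonnegative coefficient on `ℝ≥0`
(element of `L∞(ℝ≥0; ℝ≥0)`). -/
def CoeffBM (f : ℝ → ℝ) : Prop :=
  Measurable f ∧ (∃ C : ℝ, ∀ θ, 0 ≤ θ → f θ ≤ C) ∧ (∀ θ, 0 ≤ θ → 0 ≤ f θ)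

/-- A measurable coefficient with values in `[0,1]` on `ℝ≥0`
(element of `L∞(ℝ≥0; [0,1])`). -/
def FracBM (f : ℝ → ℝ) : Prop :=
  Measurable f ∧ ∀ θ, 0 ≤ θ → f θ ∈ Set.Icc (0:ℝ) 1

/-- A bounded continuous nonnegative coefficient on `ℝ≥0`. -/
def CoeffBC (f : ℝ → ℝ) : Prop :=
  Continuous f ∧ (∃ C : ℝ, ∀ θ, 0 ≤ θ → f θ ≤ C) ∧ (∀ θ, 0 ≤ θ → 0 ≤ f θ)

/-- A continuous coefficient with values in `[0,1]` on `ℝ≥0`. -/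
def FracBC (f : ℝ → ℝ) : Prop :=
  Continuous f ∧ ∀ θ, 0 ≤ θ → f θ ∈ Set.Icc (0:ℝ) 1

/-- Variation-of-constants expression `S[b]` for the susceptible compartment. -/
def Ssol (μ N0 p S0 : ℝ) (b : ℝ → ℝ) (t : ℝ) : ℝ :=
  S0 * Real.exp (-(∫ s in (0:ℝ)..t, (p + b s + μ))) +
    μ * N0 * ∫ s in (0:ℝ)..t, Real.exp (-(∫ τ in s..t, (p + b τ + μ)))

/-- Variation-of-constants expression `V[b]` for the vaccinated compartment. -/
def Vsol (μ N0 p ζ ε S0 V0 : ℝ) (b : ℝ → ℝ) (t : ℝ) : ℝ :=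
  V0 * Real.exp (-(∫ s in (0:ℝ)..t, (ζ * ε + b s * (1 - ε) + μ))) +
    p * ∫ s in (0:ℝ)..t, Ssol μ N0 p S0 b s *
      Real.exp (-(∫ τ in s..t, (ζ * ε + b τ * (1 - ε) + μ)))

/-- The boundary value `ε̃(t) = β(t)·(S(t) + (1−ε)V(t))`. -/
def epsTilde (μ N0 p ζ ε S0 V0 : ℝ) (β : ℝ → ℝ) (t : ℝ) : ℝ :=
  β t * (Ssol μ N0 p S0 β t + (1 - ε) * Vsol μ N0 p ζ ε S0 V0 β t)

/-- Age density along characteristics: initial datum `f0` transported below the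
diagonal, boundary datum `bdry` transported above the diagonal, with survival
kernel `π`. -/
def dens (π f0 bdry : ℝ → ℝ) (t θ : ℝ) : ℝ :=
  if t < θ then f0 (θ - t) * π θ / π (θ - t) else bdry (t - θ) * π θ

/-- The Volterra integral system for the triple `(β, α, ι)` of boundary values. -/
def VolterraSystem (μ N0 p ζ ε S0 V0 : ℝ)
    (βA βI k χ γA γI q ξ e0 a0 i0 β α ι : ℝ → ℝ) : Prop :=
  ContinuousOn β (Set.Ici 0) ∧ ContinuousOn α (Set.Ici 0) ∧ ContinuousOn ι (Set.Ici 0) ∧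
    ∀ t, 0 ≤ t →
      β t = (∫ s in (0:ℝ)..t,
          (βA (t - s) * α s * piA μ γA ξ χ (t - s) +
            βI (t - s) * ι s * piI μ γI (t - s))) +
        (∫ s in Set.Ioi (0:ℝ),
          (βA (t + s) * a0 s * piA μ γA ξ χ (t + s) / piA μ γA ξ χ s +
            βI (t + s) * i0 s * piI μ γI (t + s) / piI μ γI s)) ∧
      α t = (∫ s in (0:ℝ)..t,
          k (t - s) * q (t - s) * β s *
            (Ssol μ N0 p S0 β s + (1 - ε) * Vsol μ N0 p ζ ε S0 V0 β s) * piE μ k (t - s)) +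
        (∫ s in Set.Ioi (0:ℝ),
          k (t + s) * q (t + s) * e0 s * piE μ k (t + s) / piE μ k s) ∧
      ι t = (∫ s in (0:ℝ)..t,
          (k (t - s) * (1 - q (t - s)) * β s *
              (Ssol μ N0 p S0 β s + (1 - ε) * Vsol μ N0 p ζ ε S0 V0 β s) * piE μ k (t - s) +
            χ (t - s) * (1 - ξ (t - s)) * α s * piA μ γA ξ χ (t - s))) +
        (∫ s in Set.Ioi (0:ℝ),
          (k (t + s) * (1 - q (t + s)) * e0 s * piE μ k (t + s) / piE μ k s +
            χ (t + s) * (1 - ξ (t + s)) * a0 s * piA μ γA ξ χ (t + s) / piA μ γA ξ χ s))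

/-- `R_A = (∫₀^∞ k q π_E)·(∫₀^∞ β_A π_A)`. -/
def RAdef (μ : ℝ) (βA k q γA ξ χ : ℝ → ℝ) : ℝ :=
  (∫ s in Set.Ioi (0:ℝ), k s * q s * piE μ k s) *
    (∫ s in Set.Ioi (0:ℝ), βA s * piA μ γA ξ χ s)

/-- `R_I = (∫₀^∞ k(1−q)π_E + (∫₀^∞ k q π_E)·(∫₀^∞ χ(1−ξ)π_A))·(∫₀^∞ β_I π_I)`. -/
def RIdef (μ : ℝ) (βI k q χ ξ γA γI : ℝ → ℝ) : ℝ :=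
  ((∫ s in Set.Ioi (0:ℝ), k s * (1 - q s) * piE μ k s) +
      (∫ s in Set.Ioi (0:ℝ), k s * q s * piE μ k s) *
        (∫ s in Set.Ioi (0:ℝ), χ s * (1 - ξ s) * piA μ γA ξ χ s)) *
    (∫ s in Set.Ioi (0:ℝ), βI s * piI μ γI s)

/-- The basic reproduction number `R₀`. -/
def R0def (μ N0 p ζ ε : ℝ) (βA βI k χ γA γI q ξ : ℝ → ℝ) : ℝ :=
  (μ * N0 / (p + μ)) * (1 + p * (1 - ε) / (ζ * ε + μ)) *
    (RAdef μ βA k q γA ξ χ + RIdef μ βI k q χ ξ γA γI)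

/-- A steady state of the age-structured SVEAIR problem. -/
def SteadyState (μ N0 p ζ ε : ℝ) (βA βI k χ γA γI q ξ : ℝ → ℝ)
    (Sst Vst βst εst αst ιst : ℝ) (est ast ist : ℝ → ℝ) : Prop :=
  0 ≤ Sst ∧ 0 ≤ Vst ∧ 0 ≤ βst ∧ 0 ≤ εst ∧ 0 ≤ αst ∧ 0 ≤ ιst ∧
    (∀ θ, 0 ≤ θ → 0 ≤ est θ) ∧ (∀ θ, 0 ≤ θ → 0 ≤ ast θ) ∧ (∀ θ, 0 ≤ θ → 0 ≤ ist θ) ∧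
    Sst = μ * N0 / (p + βst + μ) ∧
    Vst = p * Sst / (ζ * ε + βst * (1 - ε) + μ) ∧
    (∀ θ, 0 ≤ θ → est θ = εst * piE μ k θ) ∧
    (∀ θ, 0 ≤ θ → ast θ = αst * piA μ γA ξ χ θ) ∧
    (∀ θ, 0 ≤ θ → ist θ = ιst * piI μ γI θ) ∧
    εst = βst * (Sst + (1 - ε) * Vst) ∧
    αst = (∫ θ in Set.Ioi (0:ℝ), k θ * q θ * est θ) ∧
    ιst = (∫ θ in Set.Ioi (0:ℝ), (k θ * (1 - q θ) * est θ + χ θ * (1 - ξ θ) * ast θ)) ∧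
    βst = (∫ θ in Set.Ioi (0:ℝ), (βA θ * ast θ + βI θ * ist θ))

/-- The scalar function `g` whose fixed points characterize steady states. -/
def gfun (μ N0 p ζ ε RA RI β : ℝ) : ℝ :=
  (μ * N0 / (p + β + μ)) * (1 + p * (1 - ε) / (ζ * ε + β * (1 - ε) + μ)) * (RA + RI)

/-- The Lyapunov weight `f_I`. -/
def fIfun (μ M : ℝ) (βI γI : ℝ → ℝ) (θ : ℝ) : ℝ :=
  M * ∫ s in Set.Ioi θ, βI s * Real.exp (-(∫ τ in θ..s, (γI τ + μ)))

/-- The Lyapunov weight `f_A`. -/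
def fAfun (μ M : ℝ) (βA βI γA γI ξ χ : ℝ → ℝ) (θ : ℝ) : ℝ :=
  M * (∫ s in Set.Ioi θ,
      βA s * Real.exp (-(∫ τ in θ..s, (γA τ * ξ τ + χ τ * (1 - ξ τ) + μ)))) +
    fIfun μ M βI γI 0 * ∫ s in Set.Ioi θ,
      χ s * (1 - ξ s) * Real.exp (-(∫ τ in θ..s, (γA τ * ξ τ + χ τ * (1 - ξ τ) + μ)))

/-- The Lyapunov weight `f_E`. -/
def fEfun (μ M : ℝ) (βA βI k q γA γI ξ χ : ℝ → ℝ) (θ : ℝ) : ℝ :=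
  fAfun μ M βA βI γA γI ξ χ 0 *
      (∫ s in Set.Ioi θ, k s * q s * Real.exp (-(∫ τ in θ..s, (k τ + μ)))) +
    fIfun μ M βI γI 0 *
      ∫ s in Set.Ioi θ, k s * (1 - q s) * Real.exp (-(∫ τ in θ..s, (k τ + μ)))


section AuxLemmas

lemma key_integrable {μ C : ℝ} (hμ : 0 < μ) {g w : ℝ → ℝ}
    (hg : Continuous g) (hw : Continuous w)
    (hgC : ∀ s, 0 ≤ s → |g s| ≤ C) (hwμ : ∀ s, 0 ≤ s → μ ≤ w s)
    {θ : ℝ} (hθ : 0 ≤ θ) :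
    IntegrableOn (fun s => g s * Real.exp (-(∫ τ in θ..s, w τ))) (Set.Ioi θ) := by
  have hcont : Continuous fun s => g s * Real.exp (-(∫ τ in θ..s, w τ)) :=
    hg.mul ((intervalIntegral.continuous_primitive (fun a b => hw.intervalIntegrable a b) θ).neg.rexp)
  refine Integrable.mono' (g := fun s => (C * Real.exp (μ * θ)) * Real.exp (-μ * s))
    (((exp_neg_integrableOn_Ioi θ hμ).const_mul _)) hcont.aestronglyMeasurable ?_
  filter_upwards [ae_restrict_mem measurableSet_Ioi] with s hs
  have hs' : θ ≤ s := le_of_lt hs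
  have hC0 : 0 ≤ C := (abs_nonneg _).trans (hgC θ hθ)
  have h1 : μ * (s - θ) ≤ ∫ τ in θ..s, w τ := by
    have := intervalIntegral.integral_mono_on (μ := MeasureTheory.volume) hs' (intervalIntegrable_const)
      (hw.intervalIntegrable θ s) (fun τ hτ => hwμ τ (hθ.trans hτ.1))
    simpa [mul_comm] using this
  have h2 : Real.exp (-(∫ τ in θ..s, w τ)) ≤ Real.exp (-(μ * (s - θ))) :=
    Real.exp_le_exp.2 (by linarith)
  calc ‖g s * Real.exp (-(∫ τ in θ..s, w τ))‖
      = |g s| * Real.exp (-(∫ τ in θ..s, w τ)) := by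
        rw [norm_mul, Real.norm_eq_abs, Real.norm_eq_abs, abs_of_pos (Real.exp_pos _)]
    _ ≤ C * Real.exp (-(μ * (s - θ))) :=
        mul_le_mul (hgC s (hθ.trans hs')) h2 (Real.exp_pos _).le hC0
    _ = (C * Real.exp (μ * θ)) * Real.exp (-μ * s) := by
        rw [mul_assoc, ← Real.exp_add]; ring_nf

lemma key_deriv {μ C : ℝ} (hμ : 0 < μ) {g w : ℝ → ℝ}
    (hg : Continuous g) (hw : Continuous w)
    (hgC : ∀ s, 0 ≤ s → |g s| ≤ C) (hwμ : ∀ s, 0 ≤ s → μ ≤ w s)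
    {θ : ℝ} (hθ : 0 ≤ θ) :
    HasDerivWithinAt (fun t => ∫ s in Set.Ioi t, g s * Real.exp (-(∫ τ in t..s, w τ)))
      (w θ * (∫ s in Set.Ioi θ, g s * Real.exp (-(∫ τ in θ..s, w τ))) - g θ)
      (Set.Ici 0) θ := by
  set W : ℝ → ℝ := fun s => ∫ τ in (0:ℝ)..s, w τ with hWdef
  have hWc : Continuous W :=
    intervalIntegral.continuous_primitive (fun a b => hw.intervalIntegrable a b) 0
  set h : ℝ → ℝ := fun s => g s * Real.exp (-(W s)) with hhdef
  have hhc : Continuous h := hg.mul (hWc.neg.rexp)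
  have hsplit : ∀ t s : ℝ, g s * Real.exp (-(∫ τ in t..s, w τ)) = Real.exp (W t) * h s := by
    intro t s
    have h0 : (∫ τ in t..s, w τ) = W s - W t :=
      (intervalIntegral.integral_interval_sub_left (hw.intervalIntegrable 0 s)
        (hw.intervalIntegrable 0 t)).symm
    have h1 : -(W s - W t) = W t + -(W s) := by ring
    rw [h0, h1, Real.exp_add, hhdef]; ring
  set J : ℝ → ℝ := fun t => ∫ s in Set.Ioi t, h s with hJdef
  have hfeq : (fun t => ∫ s in Set.Ioi t, g s * Real.exp (-(∫ τ in t..s, w τ)))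
      = fun t => Real.exp (W t) * J t := by
    funext t
    simp only [hsplit, hJdef]
    exact integral_const_mul _ _
  have hInt : ∀ t : ℝ, 0 ≤ t → IntegrableOn h (Set.Ioi t) := by
    intro t ht
    have heq : h = fun s => Real.exp (-(W t)) * (g s * Real.exp (-(∫ τ in t..s, w τ))) := by
      funext s
      rw [hsplit t s, ← mul_assoc, ← Real.exp_add, neg_add_cancel, Real.exp_zero, one_mul]
    rw [heq]
    exact (key_integrable hμ hg hw hgC hwμ ht).const_mul _
  have hJrep : ∀ t, 0 ≤ t → J t = J 0 - ∫ s in (0:ℝ)..t, h s := by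
    intro t ht
    have hu : Set.Ioc 0 t ∪ Set.Ioi t = Set.Ioi (0:ℝ) := Set.Ioc_union_Ioi_eq_Ioi ht
    have h1 : IntegrableOn h (Set.Ioc 0 t) :=
      (hhc.integrableOn_Icc).mono_set Set.Ioc_subset_Icc_self
    have key := MeasureTheory.setIntegral_union (Set.Ioc_disjoint_Ioi le_rfl)
      measurableSet_Ioi h1 (hInt t ht)
    rw [hu] at key
    rw [intervalIntegral.integral_of_le ht]
    simp only [hJdef] at key ⊢
    linarith
  have hF : HasDerivAt (fun t => ∫ s in (0:ℝ)..t, h s) (h θ) θ :=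
    intervalIntegral.integral_hasDerivAt_right (hhc.intervalIntegrable 0 θ)
      (hhc.stronglyMeasurableAtFilter _ _) hhc.continuousAt
  have hJd : HasDerivWithinAt J (-(h θ)) (Set.Ici 0) θ :=
    ((hF.const_sub (J 0)).hasDerivWithinAt).congr (fun x hx => hJrep x hx) (hJrep θ hθ)
  have hWd : HasDerivAt W (w θ) θ :=
    intervalIntegral.integral_hasDerivAt_right (hw.intervalIntegrable 0 θ)
      (hw.stronglyMeasurableAtFilter _ _) hw.continuousAt
  have hEd : HasDerivAt (fun t => Real.exp (W t)) (Real.exp (W θ) * w θ) θ := hWd.exp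
  have hprod : HasDerivWithinAt (fun t => Real.exp (W t) * J t)
      (Real.exp (W θ) * w θ * J θ + Real.exp (W θ) * (-(h θ))) (Set.Ici 0) θ :=
    hEd.hasDerivWithinAt.mul hJd
  rw [hfeq, congrFun hfeq θ]
  have hone : Real.exp (W θ) * Real.exp (-(W θ)) = 1 := by
    rw [← Real.exp_add, add_neg_cancel, Real.exp_zero]
  convert hprod using 1
  simp only [hhdef]
  linear_combination (g θ) * hone

end AuxLemmas

/-- The Lyapunov weights `f_E, f_A, f_I` are well defined
(the improper integrals converge), differentiable on `ℝ≥0`, and satisfy the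
stated linear ODEs. -/
theorem lyapunov_weights_wellDefined_and_derivatives
    (μ M : ℝ) (βA βI k χ γA γI q ξ : ℝ → ℝ)
    (hμ : 0 < μ) (hM : 0 ≤ M)
    (hβA : CoeffBC βA) (hβI : CoeffBC βI) (hk : CoeffBC k) (hχ : CoeffBC χ)
    (hγA : CoeffBC γA) (hγI : CoeffBC γI) (hq : FracBC q) (hξ : FracBC ξ) :
    -- the improper integrals defining f_I, f_A, f_E converge
    (∀ θ, 0 ≤ θ →
      IntegrableOn (fun s => βI s * Real.exp (-(∫ τ in θ..s, (γI τ + μ)))) (Set.Ioi θ) ∧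
      IntegrableOn (fun s =>
        βA s * Real.exp (-(∫ τ in θ..s, (γA τ * ξ τ + χ τ * (1 - ξ τ) + μ)))) (Set.Ioi θ) ∧
      IntegrableOn (fun s =>
        χ s * (1 - ξ s) * Real.exp (-(∫ τ in θ..s, (γA τ * ξ τ + χ τ * (1 - ξ τ) + μ))))
        (Set.Ioi θ) ∧
      IntegrableOn (fun s => k s * q s * Real.exp (-(∫ τ in θ..s, (k τ + μ)))) (Set.Ioi θ) ∧
      IntegrableOn (fun s => k s * (1 - q s) * Real.exp (-(∫ τ in θ..s, (k τ + μ))))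
        (Set.Ioi θ)) ∧
    -- f_E is differentiable on ℝ≥0 and satisfies its ODE
    (∀ θ, 0 ≤ θ → HasDerivWithinAt (fEfun μ M βA βI k q γA γI ξ χ)
      ((k θ + μ) * fEfun μ M βA βI k q γA γI ξ χ θ -
        fAfun μ M βA βI γA γI ξ χ 0 * (k θ * q θ) -
        fIfun μ M βI γI 0 * (k θ * (1 - q θ))) (Set.Ici 0) θ) ∧
    -- f_A is differentiable on ℝ≥0 and satisfies its ODE
    (∀ θ, 0 ≤ θ → HasDerivWithinAt (fAfun μ M βA βI γA γI ξ χ)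
      ((γA θ * ξ θ + χ θ * (1 - ξ θ) + μ) * fAfun μ M βA βI γA γI ξ χ θ -
        fIfun μ M βI γI 0 * (χ θ * (1 - ξ θ)) - M * βA θ) (Set.Ici 0) θ) ∧
    -- f_I is differentiable on ℝ≥0 and satisfies its ODE
    (∀ θ, 0 ≤ θ → HasDerivWithinAt (fIfun μ M βI γI)
      ((γI θ + μ) * fIfun μ M βI γI θ - M * βI θ) (Set.Ici 0) θ) := by
  -- hypotheses unpacked
  obtain ⟨hβAc, ⟨CA, hCA⟩, hβA0⟩ := hβA
  obtain ⟨hβIc, ⟨CI, hCI⟩, hβI0⟩ := hβI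
  obtain ⟨hkc, ⟨Ck, hCk⟩, hk0⟩ := hk
  obtain ⟨hχc, ⟨Cχ, hCχ⟩, hχ0⟩ := hχ
  obtain ⟨hγAc, _, hγA0⟩ := hγA
  obtain ⟨hγIc, _, hγI0⟩ := hγI
  obtain ⟨hqc, hq01⟩ := hq
  obtain ⟨hξc, hξ01⟩ := hξ
  -- the three rate functions
  set wI : ℝ → ℝ := fun τ => γI τ + μ with hwIdef
  set wA : ℝ → ℝ := fun τ => γA τ * ξ τ + χ τ * (1 - ξ τ) + μ with hwAdef
  set wE : ℝ → ℝ := fun τ => k τ + μ with hwEdef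
  have hwIc : Continuous wI := hγIc.add continuous_const
  have hwAc : Continuous wA :=
    ((hγAc.mul hξc).add (hχc.mul (continuous_const.sub hξc))).add continuous_const
  have hwEc : Continuous wE := hkc.add continuous_const
  have hwIμ : ∀ s, 0 ≤ s → μ ≤ wI s := fun s hs => le_add_of_nonneg_left (hγI0 s hs)
  have hwAμ : ∀ s, 0 ≤ s → μ ≤ wA s := by
    intro s hs
    have h1 : 0 ≤ γA s * ξ s := mul_nonneg (hγA0 s hs) (hξ01 s hs).1
    have h2 : 0 ≤ χ s * (1 - ξ s) := mul_nonneg (hχ0 s hs) (by linarith [(hξ01 s hs).2])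
    simp only [hwAdef]; linarith
  have hwEμ : ∀ s, 0 ≤ s → μ ≤ wE s := fun s hs => le_add_of_nonneg_left (hk0 s hs)
  -- bounded nonnegative numerators
  have hgβI : ∀ s, 0 ≤ s → |βI s| ≤ CI := fun s hs => by
    rw [abs_of_nonneg (hβI0 s hs)]; exact hCI s hs
  have hgβA : ∀ s, 0 ≤ s → |βA s| ≤ CA := fun s hs => by
    rw [abs_of_nonneg (hβA0 s hs)]; exact hCA s hs
  have hgχξ : ∀ s, 0 ≤ s → |χ s * (1 - ξ s)| ≤ Cχ := by
    intro s hs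
    have h1 : 0 ≤ 1 - ξ s := by linarith [(hξ01 s hs).2]
    have h2 : 1 - ξ s ≤ 1 := by linarith [(hξ01 s hs).1]
    rw [abs_of_nonneg (mul_nonneg (hχ0 s hs) h1)]
    calc χ s * (1 - ξ s) ≤ χ s * 1 := mul_le_mul_of_nonneg_left h2 (hχ0 s hs)
      _ ≤ Cχ := by rw [mul_one]; exact hCχ s hs
  have hgkq : ∀ s, 0 ≤ s → |k s * q s| ≤ Ck := by
    intro s hs
    rw [abs_of_nonneg (mul_nonneg (hk0 s hs) (hq01 s hs).1)]
    calc k s * q s ≤ k s * 1 := mul_le_mul_of_nonneg_left (hq01 s hs).2 (hk0 s hs)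
      _ ≤ Ck := by rw [mul_one]; exact hCk s hs
  have hgkq' : ∀ s, 0 ≤ s → |k s * (1 - q s)| ≤ Ck := by
    intro s hs
    have h1 : 0 ≤ 1 - q s := by linarith [(hq01 s hs).2]
    have h2 : 1 - q s ≤ 1 := by linarith [(hq01 s hs).1]
    rw [abs_of_nonneg (mul_nonneg (hk0 s hs) h1)]
    calc k s * (1 - q s) ≤ k s * 1 := mul_le_mul_of_nonneg_left h2 (hk0 s hs)
      _ ≤ Ck := by rw [mul_one]; exact hCk s hs
  have hgχξc : Continuous fun s => χ s * (1 - ξ s) := hχc.mul (continuous_const.sub hξc)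
  have hgkqc : Continuous fun s => k s * q s := hkc.mul hqc
  have hgkqc' : Continuous fun s => k s * (1 - q s) := hkc.mul (continuous_const.sub hqc)
  refine ⟨fun θ hθ => ⟨?_, ?_, ?_, ?_, ?_⟩, ?_, ?_, ?_⟩
  · exact key_integrable hμ hβIc hwIc hgβI hwIμ hθ
  · exact key_integrable hμ hβAc hwAc hgβA hwAμ hθ
  · exact key_integrable hμ hgχξc hwAc hgχξ hwAμ hθ
  · exact key_integrable hμ hgkqc hwEc hgkq hwEμ hθ
  · exact key_integrable hμ hgkqc' hwEc hgkq' hwEμ hθ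
  · -- f_E
    intro θ hθ
    have hd1 := (key_deriv hμ hgkqc hwEc hgkq hwEμ hθ).const_mul (fAfun μ M βA βI γA γI ξ χ 0)
    have hd2 := (key_deriv hμ hgkqc' hwEc hgkq' hwEμ hθ).const_mul (fIfun μ M βI γI 0)
    have h := hd1.add hd2
    simp only [fEfun]
    refine h.congr_deriv ?_
    simp only [hwEdef]
    ring
  · -- f_A
    intro θ hθ
    have hd1 := (key_deriv hμ hβAc hwAc hgβA hwAμ hθ).const_mul M
    have hd2 := (key_deriv hμ hgχξc hwAc hgχξ hwAμ hθ).const_mul (fIfun μ M βI γI 0)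
    have h := hd1.add hd2
    simp only [fAfun]
    refine h.congr_deriv ?_
    simp only [hwAdef]
    ring
  · -- f_I
    intro θ hθ
    have h := (key_deriv hμ hβIc hwIc hgβI hwIμ hθ).const_mul M
    simp only [fIfun]
    refine h.congr_deriv ?_
    simp only [hwIdef]
    ring
end
end

section
/- Let R be the unique C¹ function with R(0) = R_init ≥ 0 and R'(t) = ζεV(t) + ∫₀^∞ [γ_A(θ)ξ(θ)a(t,θ) + γ_I(θ)i(t,θ)] dθ − μR(t). If N0 := S0 + V0 + ∫₀^∞ e0 + ∫₀^∞ a0 + ∫₀^∞ i0 + R_init, then the total population N(t) := S(t) + V(t) + ∫₀^∞ e(t,θ) dθ + ∫₀^∞ a(t,θ) dθ + ∫₀^∞ i(t,θ) dθ + R(t) satisfies N(t) = N0 for all t ≥ 0. -/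
open MeasureTheory Filter

noncomputable section

open MeasureTheory Filter Set intervalIntegral

namespace TPC

/-- primitive of a kernel -/
def Pm (m : ℝ → ℝ) (θ : ℝ) : ℝ := ∫ τ in (0:ℝ)..θ, m τ
/-- survival function of a kernel -/
def pim (m : ℝ → ℝ) (θ : ℝ) : ℝ := Real.exp (-(Pm m θ))

/-- a bounded measurable nonnegative kernel -/
structure Ker (m : ℝ → ℝ) (C : ℝ) : Prop where
  meas : Measurable m
  nn : ∀ θ, 0 ≤ m θ
  le : ∀ θ, m θ ≤ C

variable {m : ℝ → ℝ} {C : ℝ}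

lemma boundedMeasurable_integrableOn {f : ℝ → ℝ} {s : Set ℝ} (hf : Measurable f)
    (hs : MeasurableSet s) (hfin : volume s < ⊤) {D : ℝ} (hD : ∀ x ∈ s, |f x| ≤ D) :
    IntegrableOn f s := by
  refine Integrable.mono' (integrableOn_const (C := D) hfin.ne)
    hf.aestronglyMeasurable ?_
  exact (ae_restrict_iff' hs).2 (ae_of_all _ fun x hx => hD x hx)

lemma volume_uIoc_lt_top {a b : ℝ} : volume (Set.uIoc a b) < ⊤ := by
  rw [Set.uIoc]; exact measure_Ioc_lt_top

lemma Ker.intInt (hm : Ker m C) (a b : ℝ) : IntervalIntegrable m volume a b := by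
  rw [intervalIntegrable_iff]
  exact boundedMeasurable_integrableOn hm.meas measurableSet_uIoc volume_uIoc_lt_top
    (fun x _ => by rw [abs_of_nonneg (hm.nn x)]; exact hm.le x)

lemma Ker.Cnn (hm : Ker m C) : 0 ≤ C := le_trans (hm.nn 0) (hm.le 0)

lemma Pm_add (hm : Ker m C) (a b : ℝ) : Pm m b = Pm m a + ∫ τ in a..b, m τ := by
  rw [Pm, Pm, intervalIntegral.integral_add_adjacent_intervals (hm.intInt 0 a) (hm.intInt a b)]

lemma Pm_mono (hm : Ker m C) {a b : ℝ} (hab : a ≤ b) : Pm m a ≤ Pm m b := by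
  rw [Pm_add hm a b]
  have : 0 ≤ ∫ τ in a..b, m τ :=
    intervalIntegral.integral_nonneg hab (fun u _ => hm.nn u)
  linarith

lemma Pm_cont (hm : Ker m C) : Continuous (Pm m) :=
  intervalIntegral.continuous_primitive (fun a b => hm.intInt a b) 0

lemma Pm_zero (m : ℝ → ℝ) : Pm m 0 = 0 := by simp [Pm]

lemma pim_pos (m : ℝ → ℝ) (θ : ℝ) : 0 < pim m θ := Real.exp_pos _

lemma pim_zero (m : ℝ → ℝ) : pim m 0 = 1 := by simp [pim, Pm_zero]

lemma pim_cont (hm : Ker m C) : Continuous (pim m) :=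
  Real.continuous_exp.comp (Pm_cont hm).neg

lemma pim_anti (hm : Ker m C) {a b : ℝ} (hab : a ≤ b) : pim m b ≤ pim m a :=
  Real.exp_le_exp.2 (neg_le_neg (Pm_mono hm hab))

lemma pim_le_one (hm : Ker m C) {θ : ℝ} (hθ : 0 ≤ θ) : pim m θ ≤ 1 := by
  simpa [pim_zero] using pim_anti hm hθ

lemma pim_div_le_one (hm : Ker m C) {a b : ℝ} (hab : a ≤ b) : pim m b / pim m a ≤ 1 :=
  (div_le_one (pim_pos m a)).2 (pim_anti hm hab)

lemma pim_div_nonneg (m : ℝ → ℝ) (a b : ℝ) : 0 ≤ pim m b / pim m a :=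
  div_nonneg (pim_pos m b).le (pim_pos m a).le

lemma exp_neg_lip {x y : ℝ} (hx : 0 ≤ x) (hy : 0 ≤ y) :
    |Real.exp (-x) - Real.exp (-y)| ≤ |x - y| := by
  have key : ∀ u v : ℝ, 0 ≤ u → u ≤ v → Real.exp (-v) ≤ Real.exp (-u) ∧
      Real.exp (-u) - Real.exp (-v) ≤ v - u := by
    intro u v hu huv
    constructor
    · exact Real.exp_le_exp.2 (by linarith)
    · have h1 : Real.exp (-u) ≤ 1 := Real.exp_le_one_iff.2 (by linarith)
      have h2 : 1 - Real.exp (-(v - u)) ≤ v - u := by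
        have := Real.add_one_le_exp (-(v - u)); linarith
      have h3 : Real.exp (-v) = Real.exp (-u) * Real.exp (-(v - u)) := by
        rw [← Real.exp_add]; ring_nf
      have h4 : Real.exp (-u) - Real.exp (-v) = Real.exp (-u) * (1 - Real.exp (-(v - u))) := by
        rw [h3]; ring
      rw [h4]
      calc Real.exp (-u) * (1 - Real.exp (-(v - u))) ≤ 1 * (1 - Real.exp (-(v - u))) := by
            have : 0 ≤ 1 - Real.exp (-(v - u)) := by
              have : Real.exp (-(v - u)) ≤ 1 := Real.exp_le_one_iff.2 (by linarith)
              linarith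
            exact mul_le_mul_of_nonneg_right h1 this
        _ = 1 - Real.exp (-(v - u)) := one_mul _
        _ ≤ v - u := h2
  rcases le_total x y with h | h
  · rw [abs_of_nonneg (by linarith [(key x y hx h).1]), abs_of_nonpos (by linarith)]
    linarith [(key x y hx h).2]
  · rw [abs_of_nonpos (by linarith [(key y x hy h).1]), abs_of_nonneg (by linarith)]
    linarith [(key y x hy h).2]

/-- FTC for exponential of a primitive, continuous case. -/
lemma expFTC_cont {h : ℝ → ℝ} (hc : Continuous h) {a b : ℝ} :
    1 - Real.exp (-(∫ u in a..b, h u)) =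
      ∫ u in a..b, h u * Real.exp (-(∫ v in a..u, h v)) := by
  have hprim : Continuous fun w => ∫ v in a..w, h v :=
    intervalIntegral.continuous_primitive (fun c d => hc.intervalIntegrable c d) a
  have hder : ∀ u ∈ Set.uIcc a b,
      HasDerivAt (fun w => -Real.exp (-(∫ v in a..w, h v)))
        (h u * Real.exp (-(∫ v in a..u, h v))) u := by
    intro u _
    have h1 : HasDerivAt (fun w => ∫ v in a..w, h v) (h u) u :=
      intervalIntegral.integral_hasDerivAt_right (hc.intervalIntegrable a u)
        (hc.stronglyMeasurable.stronglyMeasurableAtFilter) hc.continuousAt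
    have h2 := ((h1.neg).exp).neg
    refine h2.congr_deriv (Eq.symm ?_); simp only [Pi.neg_apply]; ring
  have hint : IntervalIntegrable (fun u => h u * Real.exp (-(∫ v in a..u, h v))) volume a b :=
    (hc.mul (Real.continuous_exp.comp hprim.neg)).intervalIntegrable a b
  have := intervalIntegral.integral_eq_sub_of_hasDerivAt hder hint
  rw [intervalIntegral.integral_same] at this
  simp only [neg_zero, Real.exp_zero] at this
  linarith [this]


lemma abs_sub_max_le {x y : ℝ} (hx : 0 ≤ x) : |x - max y 0| ≤ |x - y| := by
  rcases le_total y 0 with h | h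
  · rw [max_eq_right h, sub_zero, abs_of_nonneg hx]
    calc x ≤ x - y := by linarith
      _ ≤ |x - y| := le_abs_self _
  · rw [max_eq_left h]

/-- FTC for the survival function of a bounded measurable nonnegative kernel. -/
lemma expFTC (hm : Ker m C) {a b : ℝ} (hab : a ≤ b) :
    pim m a - pim m b = ∫ u in a..b, m u * pim m u := by
  have hQcont : Continuous fun u => ∫ v in a..u, m v :=
    intervalIntegral.continuous_primitive (fun c d => hm.intInt c d) a
  have hQnn : ∀ u, a ≤ u → 0 ≤ ∫ v in a..u, m v := fun u hu =>
    intervalIntegral.integral_nonneg hu (fun v _ => hm.nn v)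
  have hexpQ_le_one : ∀ u, a ≤ u → Real.exp (-(∫ v in a..u, m v)) ≤ 1 := fun u hu =>
    Real.exp_le_one_iff.2 (by linarith [hQnn u hu])
  -- reduce to normalized claim
  have hpimrw : ∀ u, pim m u = pim m a * Real.exp (-(∫ v in a..u, m v)) := by
    intro u
    rw [pim, pim, Pm_add hm a u, ← Real.exp_add]
    ring_nf
  have hmQint : IntervalIntegrable (fun u => m u * Real.exp (-(∫ v in a..u, m v))) volume a b := by
    rw [intervalIntegrable_iff]
    refine boundedMeasurable_integrableOn
      (hm.meas.mul ((Real.continuous_exp.comp hQcont.neg).measurable))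
      measurableSet_uIoc volume_uIoc_lt_top (D := C) ?_
    intro x hx
    rw [Set.uIoc_of_le hab] at hx
    rw [abs_mul, abs_of_nonneg (hm.nn x), abs_of_nonneg (Real.exp_pos _).le]
    calc m x * Real.exp (-(∫ v in a..x, m v)) ≤ m x * 1 :=
          mul_le_mul_of_nonneg_left (hexpQ_le_one x hx.1.le) (hm.nn x)
      _ ≤ C := by rw [mul_one]; exact hm.le x
  have key : 1 - Real.exp (-(∫ u in a..b, m u)) =
      ∫ u in a..b, m u * Real.exp (-(∫ v in a..u, m v)) := by
    set Δ := (1 - Real.exp (-(∫ u in a..b, m u))) -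
      ∫ u in a..b, m u * Real.exp (-(∫ v in a..u, m v)) with hΔ
    have hK : (0:ℝ) < 3 + C * (b - a) := by
      have := mul_nonneg hm.Cnn (by linarith : (0:ℝ) ≤ b - a); linarith
    have hmain : ∀ δ : ℝ, 0 < δ → |Δ| ≤ δ := by
      intro δ hδ
      set ε := min 1 (δ / (3 + C * (b - a))) with hε
      have hεpos : 0 < ε := lt_min one_pos (div_pos hδ hK)
      have hε1 : ε ≤ 1 := min_le_left _ _
      have hεδ : ε * (3 + C * (b - a)) ≤ δ := by
        calc ε * (3 + C * (b - a)) ≤ (δ / (3 + C * (b - a))) * (3 + C * (b - a)) :=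
              mul_le_mul_of_nonneg_right (min_le_right _ _) hK.le
          _ = δ := div_mul_cancel₀ δ hK.ne'
      -- approximation
      have hm1int : Integrable ((Set.Ioc a b).indicator m) volume := by
        rw [integrable_indicator_iff measurableSet_Ioc]
        exact boundedMeasurable_integrableOn hm.meas measurableSet_Ioc measure_Ioc_lt_top
          (D := C) (fun x _ => by rw [abs_of_nonneg (hm.nn x)]; exact hm.le x)
      obtain ⟨h₀, h₀supp, h₀approx, h₀cont, h₀int⟩ :=
        hm1int.exists_hasCompactSupport_integral_sub_le hεpos
      set h : ℝ → ℝ := fun u => max (h₀ u) 0 with hh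
      have hcont : Continuous h := h₀cont.max continuous_const
      have hnn : ∀ u, 0 ≤ h u := fun u => le_max_right _ _
      have hsupp : HasCompactSupport h := by
        apply h₀supp.mono
        intro u hu
        simp only [hh, Function.mem_support, ne_eq] at hu ⊢
        intro h0; apply hu; rw [h0]; simp
      have hint : Integrable h volume := hcont.integrable_of_hasCompactSupport hsupp
      have hm1nn : ∀ u, 0 ≤ (Set.Ioc a b).indicator m u := fun u =>
        Set.indicator_nonneg (fun x _ => hm.nn x) u
      have happrox : ∫ x, |(Set.Ioc a b).indicator m x - h x| ≤ ε := by
        have hsub1 : Integrable (fun x => |(Set.Ioc a b).indicator m x - h x|) volume :=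
          (hm1int.sub hint).abs
        have hsub0 : Integrable (fun x => |(Set.Ioc a b).indicator m x - h₀ x|) volume :=
          (hm1int.sub h₀int).abs
        calc ∫ x, |(Set.Ioc a b).indicator m x - h x| ≤
              ∫ x, |(Set.Ioc a b).indicator m x - h₀ x| :=
              integral_mono hsub1 hsub0 (fun x => abs_sub_max_le (hm1nn x))
          _ = ∫ x, ‖(Set.Ioc a b).indicator m x - h₀ x‖ := by simp [Real.norm_eq_abs]
          _ ≤ ε := h₀approx
      -- interval estimate
      have est1 : ∀ c d : ℝ, a ≤ c → c ≤ d → d ≤ b → (∫ v in c..d, |m v - h v|) ≤ ε := by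
        intro c d hac hcd hdb
        rw [intervalIntegral.integral_of_le hcd]
        have hcongr : ∀ x ∈ Set.Ioc c d, |m x - h x| = |(Set.Ioc a b).indicator m x - h x| := by
          intro x hx
          rw [Set.indicator_of_mem (Set.Ioc_subset_Ioc hac hdb hx)]
        rw [setIntegral_congr_fun measurableSet_Ioc hcongr]
        calc (∫ x in Set.Ioc c d, |(Set.Ioc a b).indicator m x - h x|) ≤
              ∫ x, |(Set.Ioc a b).indicator m x - h x| :=
              setIntegral_le_integral (hm1int.sub hint).abs
                (ae_of_all _ (fun x => abs_nonneg _))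
          _ ≤ ε := happrox
      have est2 : ∀ u, a ≤ u → u ≤ b → |(∫ v in a..u, m v) - ∫ v in a..u, h v| ≤ ε := by
        intro u hau hub
        rw [← intervalIntegral.integral_sub (hm.intInt a u) (hcont.intervalIntegrable a u)]
        calc |∫ v in a..u, (m v - h v)| ≤ ∫ v in a..u, |m v - h v| :=
              intervalIntegral.abs_integral_le_integral_abs hau
          _ ≤ ε := est1 a u le_rfl hau hub
      have hQhnn : ∀ u, a ≤ u → 0 ≤ ∫ v in a..u, h v := fun u hu =>
        intervalIntegral.integral_nonneg hu (fun v _ => hnn v)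
      have keyh : 1 - Real.exp (-(∫ u in a..b, h u)) =
          ∫ u in a..b, h u * Real.exp (-(∫ v in a..u, h v)) := expFTC_cont hcont
      -- pointwise bound on the integrand difference
      have hptwise : ∀ u ∈ Set.Icc a b,
          |m u * Real.exp (-(∫ v in a..u, m v)) - h u * Real.exp (-(∫ v in a..u, h v))| ≤
            |m u - h u| + h u * ε := by
        intro u hu
        have h1 : |m u * Real.exp (-(∫ v in a..u, m v)) -
            h u * Real.exp (-(∫ v in a..u, h v))| ≤
            |m u - h u| * Real.exp (-(∫ v in a..u, m v)) +
              h u * |Real.exp (-(∫ v in a..u, m v)) - Real.exp (-(∫ v in a..u, h v))| := by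
          have : m u * Real.exp (-(∫ v in a..u, m v)) - h u * Real.exp (-(∫ v in a..u, h v)) =
              (m u - h u) * Real.exp (-(∫ v in a..u, m v)) +
                h u * (Real.exp (-(∫ v in a..u, m v)) - Real.exp (-(∫ v in a..u, h v))) := by
            ring
          rw [this]
          calc _ ≤ |(m u - h u) * Real.exp (-(∫ v in a..u, m v))| +
                |h u * (Real.exp (-(∫ v in a..u, m v)) - Real.exp (-(∫ v in a..u, h v)))| :=
                abs_add_le _ _
            _ = |m u - h u| * Real.exp (-(∫ v in a..u, m v)) +
                h u * |Real.exp (-(∫ v in a..u, m v)) - Real.exp (-(∫ v in a..u, h v))| := by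
                rw [abs_mul, abs_mul, abs_of_nonneg (Real.exp_pos _).le, abs_of_nonneg (hnn u)]
        have h2 : |Real.exp (-(∫ v in a..u, m v)) - Real.exp (-(∫ v in a..u, h v))| ≤ ε :=
          le_trans (exp_neg_lip (hQnn u hu.1) (hQhnn u hu.1)) (est2 u hu.1 hu.2)
        calc _ ≤ |m u - h u| * Real.exp (-(∫ v in a..u, m v)) +
              h u * |Real.exp (-(∫ v in a..u, m v)) - Real.exp (-(∫ v in a..u, h v))| := h1
          _ ≤ |m u - h u| * 1 + h u * ε :=
              add_le_add (mul_le_mul_of_nonneg_left (hexpQ_le_one u hu.1) (abs_nonneg _))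
                (mul_le_mul_of_nonneg_left h2 (hnn u))
          _ = |m u - h u| + h u * ε := by ring
      -- integrate the pointwise bound
      have hhQint : IntervalIntegrable (fun u => h u * Real.exp (-(∫ v in a..u, h v)))
          volume a b := by
        have : Continuous fun u => h u * Real.exp (-(∫ v in a..u, h v)) :=
          hcont.mul (Real.continuous_exp.comp
            (intervalIntegral.continuous_primitive (fun c d => hcont.intervalIntegrable c d) a).neg)
        exact this.intervalIntegrable a b
      have hdiffint : IntervalIntegrable (fun u => |m u - h u|) volume a b :=
        ((hm.intInt a b).sub (hcont.intervalIntegrable a b)).abs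
      have hinth : (∫ u in a..b, h u) ≤ C * (b - a) + ε := by
        have h1 : (∫ u in a..b, h u) = (∫ u in a..b, m u) + ∫ u in a..b, (h u - m u) := by
          rw [← intervalIntegral.integral_add (hm.intInt a b)
            ((hcont.intervalIntegrable a b).sub (hm.intInt a b))]
          congr 1; funext u; ring
        have h2 : (∫ u in a..b, m u) ≤ C * (b - a) := by
          calc (∫ u in a..b, m u) ≤ ∫ _ in a..b, C :=
                intervalIntegral.integral_mono_on hab (hm.intInt a b)
                  (intervalIntegrable_const) (fun x _ => hm.le x)
            _ = C * (b - a) := by rw [intervalIntegral.integral_const, smul_eq_mul, mul_comm]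
        have h3 : (∫ u in a..b, (h u - m u)) ≤ ∫ u in a..b, |m u - h u| := by
          refine intervalIntegral.integral_mono_on hab
            ((hcont.intervalIntegrable a b).sub (hm.intInt a b)) hdiffint (fun x _ => ?_)
          rw [abs_sub_comm]; exact le_abs_self _
        have h4 : (∫ u in a..b, |m u - h u|) ≤ ε := est1 a b le_rfl hab le_rfl
        linarith
      have hintbound : |(∫ u in a..b, m u * Real.exp (-(∫ v in a..u, m v))) -
          ∫ u in a..b, h u * Real.exp (-(∫ v in a..u, h v))| ≤ ε + (C * (b - a) + ε) * ε := by
        rw [← intervalIntegral.integral_sub hmQint hhQint]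
        calc |∫ u in a..b, (m u * Real.exp (-(∫ v in a..u, m v)) -
              h u * Real.exp (-(∫ v in a..u, h v)))| ≤
              ∫ u in a..b, |m u * Real.exp (-(∫ v in a..u, m v)) -
                h u * Real.exp (-(∫ v in a..u, h v))| :=
              intervalIntegral.abs_integral_le_integral_abs hab
          _ ≤ ∫ u in a..b, (|m u - h u| + h u * ε) := by
              refine intervalIntegral.integral_mono_on hab
                ((hmQint.sub hhQint).abs) (hdiffint.add
                  ((hcont.intervalIntegrable a b).mul_const ε)) hptwise
          _ = (∫ u in a..b, |m u - h u|) + (∫ u in a..b, h u) * ε := by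
              rw [intervalIntegral.integral_add hdiffint
                ((hcont.intervalIntegrable a b).mul_const ε),
                intervalIntegral.integral_mul_const]
          _ ≤ ε + (C * (b - a) + ε) * ε := by
              have := est1 a b le_rfl hab le_rfl
              have h5 : (∫ u in a..b, h u) * ε ≤ (C * (b - a) + ε) * ε :=
                mul_le_mul_of_nonneg_right hinth hεpos.le
              linarith
      have hexpb : |Real.exp (-(∫ u in a..b, m u)) - Real.exp (-(∫ u in a..b, h u))| ≤ ε :=
        le_trans (exp_neg_lip (hQnn b hab) (hQhnn b hab)) (est2 b hab le_rfl)
      have : |Δ| ≤ ε + (ε + (C * (b - a) + ε) * ε) := by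
        rw [hΔ]
        have hrw : (1 - Real.exp (-(∫ u in a..b, m u))) -
            (∫ u in a..b, m u * Real.exp (-(∫ v in a..u, m v))) =
            (Real.exp (-(∫ u in a..b, h u)) - Real.exp (-(∫ u in a..b, m u))) +
              ((∫ u in a..b, h u * Real.exp (-(∫ v in a..u, h v))) -
                ∫ u in a..b, m u * Real.exp (-(∫ v in a..u, m v))) := by
          rw [← keyh]; ring
        rw [hrw]
        calc _ ≤ |Real.exp (-(∫ u in a..b, h u)) - Real.exp (-(∫ u in a..b, m u))| +
              |(∫ u in a..b, h u * Real.exp (-(∫ v in a..u, h v))) -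
                ∫ u in a..b, m u * Real.exp (-(∫ v in a..u, m v))| := abs_add_le _ _
          _ ≤ ε + (ε + (C * (b - a) + ε) * ε) := by
              have e1 : |Real.exp (-(∫ u in a..b, h u)) -
                  Real.exp (-(∫ u in a..b, m u))| ≤ ε := by
                rw [abs_sub_comm]; exact hexpb
              have e2 : |(∫ u in a..b, h u * Real.exp (-(∫ v in a..u, h v))) -
                  ∫ u in a..b, m u * Real.exp (-(∫ v in a..u, m v))| ≤
                  ε + (C * (b - a) + ε) * ε := by
                rw [abs_sub_comm]; exact hintbound
              linarith
      calc |Δ| ≤ ε + (ε + (C * (b - a) + ε) * ε) := this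
        _ ≤ ε * (3 + C * (b - a)) := by nlinarith [hεpos.le, hε1, hm.Cnn, sub_nonneg.2 hab]
        _ ≤ δ := hεδ
    have habs : |Δ| ≤ 0 := by
      refine le_of_forall_pos_le_add (fun δ hδ => ?_)
      simpa using hmain δ hδ
    have hΔ0 : Δ = 0 := abs_nonpos_iff.1 habs
    rw [hΔ] at hΔ0
    linarith
  calc pim m a - pim m b = pim m a * (1 - Real.exp (-(∫ u in a..b, m u))) := by
        rw [hpimrw b]; ring
    _ = pim m a * ∫ u in a..b, m u * Real.exp (-(∫ v in a..u, m v)) := by rw [key]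
    _ = ∫ u in a..b, m u * pim m u := by
        rw [← intervalIntegral.integral_const_mul]
        refine intervalIntegral.integral_congr (fun u _ => ?_)
        rw [hpimrw u]; ring



section Dens
variable {m w f0 g : ℝ → ℝ} {C Cw : ℝ}

lemma abs_mul3 {a b c A B : ℝ} (ha : |a| ≤ A) (hb : |b| ≤ B) (hc : |c| ≤ 1) :
    |a * (b * c)| ≤ A * B := by
  have hA : 0 ≤ A := (abs_nonneg a).trans ha
  have hB : 0 ≤ B := (abs_nonneg b).trans hb
  rw [abs_mul, abs_mul]
  calc |a| * (|b| * |c|) ≤ A * (B * 1) := by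
        refine mul_le_mul ha (mul_le_mul hb hc (abs_nonneg _) hB) ?_ hA
        positivity
    _ = A * B := by ring

lemma dens_meas (hm : Ker m C) (hf0m : Measurable f0) (hg : Continuous g) (t : ℝ) :
    Measurable (fun θ => dens (pim m) f0 g t θ) := by
  unfold _root_.dens
  refine Measurable.ite (measurableSet_lt measurable_const measurable_id) ?_ ?_
  · exact ((hf0m.comp (measurable_id.sub measurable_const)).mul
      (pim_cont hm).measurable).div
      ((pim_cont hm).measurable.comp (measurable_id.sub measurable_const))
  · exact (hg.measurable.comp (measurable_const.sub measurable_id)).mul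
      (pim_cont hm).measurable

lemma integrableOn_shift {f : ℝ → ℝ} (hf : IntegrableOn f (Set.Ioi 0)) (t : ℝ) :
    IntegrableOn (fun θ => f (θ - t)) (Set.Ioi t) := by
  have h1 : Integrable ((Set.Ioi (0:ℝ)).indicator f) volume :=
    (integrable_indicator_iff measurableSet_Ioi).2 hf
  have h2 : Integrable (fun θ => (Set.Ioi (0:ℝ)).indicator f (θ - t)) volume := by
    simpa [sub_eq_add_neg] using h1.comp_add_right (-t)
  have h3 : Integrable ((Set.Ioi t).indicator fun θ => f (θ - t)) volume := by
    refine h2.congr (ae_of_all _ fun θ => ?_)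
    show (Set.Ioi (0:ℝ)).indicator f (θ - t) = (Set.Ioi t).indicator (fun θ => f (θ - t)) θ
    by_cases h : t < θ
    · rw [Set.indicator_of_mem (show θ - t ∈ Set.Ioi (0:ℝ) by simpa [sub_pos] using h),
        Set.indicator_of_mem (by simpa using h)]
    · rw [Set.indicator_of_notMem (show θ - t ∉ Set.Ioi (0:ℝ) by simpa [sub_pos] using h),
        Set.indicator_of_notMem (by simpa using h)]
  exact (integrable_indicator_iff measurableSet_Ioi).1 h3

lemma integral_Ioi_shift (F : ℝ → ℝ) (t : ℝ) :
    ∫ θ in Set.Ioi t, F θ = ∫ s in Set.Ioi (0:ℝ), F (s + t) := by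
  rw [← MeasureTheory.integral_indicator measurableSet_Ioi,
    ← MeasureTheory.integral_indicator measurableSet_Ioi]
  have key : ∀ s : ℝ, (Set.Ioi (0:ℝ)).indicator (fun u => F (u + t)) s =
      (Set.Ioi t).indicator F (s + t) := by
    intro s
    by_cases h : 0 < s
    · rw [Set.indicator_of_mem (by simpa using h),
        Set.indicator_of_mem (by simp; linarith)]
    · rw [Set.indicator_of_notMem (by simpa using h),
        Set.indicator_of_notMem (by simp; linarith)]
  calc (∫ θ, (Set.Ioi t).indicator F θ) =
        ∫ s, (Set.Ioi t).indicator F (s + t) :=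
        (integral_add_right_eq_self ((Set.Ioi t).indicator F) t).symm
    _ = ∫ s, (Set.Ioi (0:ℝ)).indicator (fun u => F (u + t)) s := by
        simp_rw [key]

lemma dens_int_Ioc (hm : Ker m C) (hw : Measurable w) (hwb : ∀ θ, |w θ| ≤ Cw)
    (hf0m : Measurable f0) (hg : Continuous g) {t : ℝ} (ht : 0 ≤ t) :
    IntegrableOn (fun θ => w θ * dens (pim m) f0 g t θ) (Set.Ioc 0 t) := by
  obtain ⟨Mg, hMg⟩ := (isCompact_Icc (a := (0:ℝ)) (b := t)).exists_bound_of_continuousOn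
    hg.continuousOn
  refine boundedMeasurable_integrableOn (hw.mul (dens_meas hm hf0m hg t)) measurableSet_Ioc
    measure_Ioc_lt_top (D := Cw * Mg) ?_
  intro θ hθ
  have hbr : dens (pim m) f0 g t θ = g (t - θ) * pim m θ := if_neg (not_lt.2 hθ.2)
  rw [hbr]
  refine abs_mul3 (hwb θ) ?_ ?_
  · simpa [Real.norm_eq_abs] using hMg (t - θ) ⟨by linarith [hθ.2], by linarith [hθ.1]⟩
  · rw [abs_of_nonneg (pim_pos m θ).le]; exact pim_le_one hm hθ.1.le

lemma dens_int_Ioi (hm : Ker m C) (hw : Measurable w) (hwb : ∀ θ, |w θ| ≤ Cw)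
    (hf0m : Measurable f0) (hf0 : IntegrableOn f0 (Set.Ioi 0)) (hg : Continuous g)
    {t : ℝ} (ht : 0 ≤ t) :
    IntegrableOn (fun θ => w θ * dens (pim m) f0 g t θ) (Set.Ioi t) := by
  have hCw : 0 ≤ Cw := (abs_nonneg _).trans (hwb 0)
  have hshift : IntegrableOn (fun θ => Cw * |f0 (θ - t)|) (Set.Ioi t) :=
    ((integrableOn_shift hf0 t).abs).const_mul Cw
  refine Integrable.mono' hshift
    ((hw.mul (dens_meas hm hf0m hg t)).aestronglyMeasurable) ?_
  refine (ae_restrict_iff' measurableSet_Ioi).2 (ae_of_all _ fun θ hθ => ?_)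
  have htθ : t < θ := hθ
  have hbr : dens (pim m) f0 g t θ = f0 (θ - t) * (pim m θ / pim m (θ - t)) := by
    rw [show dens (pim m) f0 g t θ = f0 (θ - t) * pim m θ / pim m (θ - t) from if_pos htθ,
      mul_div_assoc]
  rw [Real.norm_eq_abs, hbr]
  have h2 : |pim m θ / pim m (θ - t)| ≤ 1 := by
    rw [abs_of_nonneg (pim_div_nonneg m _ _)]
    exact pim_div_le_one hm (by linarith)
  exact abs_mul3 (hwb θ) le_rfl h2

lemma dens_int (hm : Ker m C) (hw : Measurable w) (hwb : ∀ θ, |w θ| ≤ Cw)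
    (hf0m : Measurable f0) (hf0 : IntegrableOn f0 (Set.Ioi 0)) (hg : Continuous g)
    {t : ℝ} (ht : 0 ≤ t) :
    IntegrableOn (fun θ => w θ * dens (pim m) f0 g t θ) (Set.Ioi 0) := by
  rw [← Set.Ioc_union_Ioi_eq_Ioi ht]
  exact (dens_int_Ioc hm hw hwb hf0m hg ht).union (dens_int_Ioi hm hw hwb hf0m hf0 hg ht)

/-- change of variables: the weighted density integral splits into a shifted
initial part and a boundary convolution part. -/
lemma dens_split (hm : Ker m C) (hw : Measurable w) (hwb : ∀ θ, |w θ| ≤ Cw)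
    (hf0m : Measurable f0) (hf0 : IntegrableOn f0 (Set.Ioi 0)) (hg : Continuous g)
    {t : ℝ} (ht : 0 ≤ t) :
    (∫ θ in Set.Ioi (0:ℝ), w θ * dens (pim m) f0 g t θ) =
      (∫ s in Set.Ioi (0:ℝ), w (t + s) * (f0 s * (pim m (t + s) / pim m s))) +
      ∫ s in (0:ℝ)..t, w (t - s) * (g s * pim m (t - s)) := by
  have hunion : Set.Ioi (0:ℝ) = Set.Ioc 0 t ∪ Set.Ioi t := (Set.Ioc_union_Ioi_eq_Ioi ht).symm
  have hpart1 : (∫ θ in Set.Ioi t, w θ * dens (pim m) f0 g t θ) =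
      ∫ s in Set.Ioi (0:ℝ), w (t + s) * (f0 s * (pim m (t + s) / pim m s)) := by
    have hcongr : (∫ θ in Set.Ioi t, w θ * dens (pim m) f0 g t θ) =
        ∫ θ in Set.Ioi t, w θ * (f0 (θ - t) * (pim m θ / pim m (θ - t))) := by
      refine setIntegral_congr_fun measurableSet_Ioi (fun θ (hθ : t < θ) => ?_)
      rw [show dens (pim m) f0 g t θ = f0 (θ - t) * pim m θ / pim m (θ - t) from if_pos hθ,
        mul_div_assoc]
    rw [hcongr,
      integral_Ioi_shift (fun θ => w θ * (f0 (θ - t) * (pim m θ / pim m (θ - t)))) t]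
    refine setIntegral_congr_fun measurableSet_Ioi (fun s _ => ?_)
    simp only [add_sub_cancel_right]
    rw [add_comm s t]
  have hpart2 : (∫ θ in Set.Ioc 0 t, w θ * dens (pim m) f0 g t θ) =
      ∫ s in (0:ℝ)..t, w (t - s) * (g s * pim m (t - s)) := by
    have hcongr : (∫ θ in Set.Ioc 0 t, w θ * dens (pim m) f0 g t θ) =
        ∫ θ in Set.Ioc 0 t, w θ * (g (t - θ) * pim m θ) := by
      refine setIntegral_congr_fun measurableSet_Ioc (fun θ hθ => ?_)
      rw [show dens (pim m) f0 g t θ = g (t - θ) * pim m θ from if_neg (not_lt.2 hθ.2)]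
    rw [hcongr, ← intervalIntegral.integral_of_le ht]
    have h2 : (∫ s in (0:ℝ)..t, w (t - s) * (g s * pim m (t - s))) =
        ∫ s in (0:ℝ)..t, (fun x => w x * (g (t - x) * pim m x)) (t - s) := by
      refine intervalIntegral.integral_congr (fun s _ => ?_)
      simp only [sub_sub_cancel]
    rw [h2, intervalIntegral.integral_comp_sub_left
      (fun x => w x * (g (t - x) * pim m x)) t, sub_self, sub_zero]
  conv_lhs => rw [hunion]
  rw [setIntegral_union Set.Ioc_disjoint_Ioi_same measurableSet_Ioi
    (dens_int_Ioc hm hw hwb hf0m hg ht) (dens_int_Ioi hm hw hwb hf0m hf0 hg ht),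
    hpart1, hpart2, add_comm]

lemma dens_zero (hm : Ker m C) (hf0 : IntegrableOn f0 (Set.Ioi 0)) :
    (∫ θ in Set.Ioi (0:ℝ), dens (pim m) f0 g 0 θ) = ∫ θ in Set.Ioi (0:ℝ), f0 θ := by
  refine setIntegral_congr_fun measurableSet_Ioi (fun θ (hθ : 0 < θ) => ?_)
  rw [show dens (pim m) f0 g 0 θ = f0 (θ - 0) * pim m θ / pim m (θ - 0) from if_pos hθ]
  rw [sub_zero, mul_div_assoc, div_self (pim_pos m θ).ne', mul_one]

end Dens

section Fubini
variable {m w f0 g : ℝ → ℝ} {C Cw : ℝ}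

lemma Phi_int (hm : Ker m C) (hw : Measurable w) (hwb : ∀ θ, |w θ| ≤ Cw)
    (hf0m : Measurable f0) (hf0 : IntegrableOn f0 (Set.Ioi 0)) {T : ℝ} (hT : 0 ≤ T) :
    Integrable (fun p : ℝ × ℝ => w (p.1 + p.2) * (f0 p.2 * (pim m (p.1 + p.2) / pim m p.2)))
      ((volume.restrict (Set.Ioc 0 T)).prod (volume.restrict (Set.Ioi 0))) := by
  have hadd : Measurable fun p : ℝ × ℝ => p.1 + p.2 := measurable_fst.add measurable_snd
  have hmeas : Measurable fun p : ℝ × ℝ =>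
      w (p.1 + p.2) * (f0 p.2 * (pim m (p.1 + p.2) / pim m p.2)) :=
    (hw.comp hadd).mul ((hf0m.comp measurable_snd).mul
      (((pim_cont hm).measurable.comp hadd).div ((pim_cont hm).measurable.comp measurable_snd)))
  have hdom : Integrable (fun p : ℝ × ℝ => Cw * |f0 p.2|)
      ((volume.restrict (Set.Ioc 0 T)).prod (volume.restrict (Set.Ioi 0))) := by
    have h1 : Integrable (fun _ : ℝ => Cw) (volume.restrict (Set.Ioc 0 T)) :=
      integrableOn_const measure_Ioc_lt_top.ne
    exact h1.mul_prod hf0.abs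
  refine hdom.mono' hmeas.aestronglyMeasurable ?_
  rw [Measure.prod_restrict]
  refine (ae_restrict_iff' (measurableSet_Ioc.prod measurableSet_Ioi)).2
    (ae_of_all _ fun p hp => ?_)
  rw [Real.norm_eq_abs]
  refine abs_mul3 (hwb _) le_rfl ?_
  rw [abs_of_nonneg (pim_div_nonneg m _ _)]
  exact pim_div_le_one hm (by linarith [hp.1.1.le] : p.2 ≤ p.1 + p.2)

lemma IoiP_integrableOn (hm : Ker m C) (hw : Measurable w) (hwb : ∀ θ, |w θ| ≤ Cw)
    (hf0m : Measurable f0) (hf0 : IntegrableOn f0 (Set.Ioi 0)) {T : ℝ} (hT : 0 ≤ T) :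
    IntegrableOn
      (fun u => ∫ s in Set.Ioi (0:ℝ), w (u + s) * (f0 s * (pim m (u + s) / pim m s)))
      (Set.Ioc 0 T) := by
  exact (Phi_int hm hw hwb hf0m hf0 hT).integral_prod_left

lemma Psi_meas (hm : Ker m C) (hw : Measurable w) (hg : Continuous g) :
    Measurable fun p : ℝ × ℝ =>
      if p.2 ≤ p.1 then w (p.1 - p.2) * (g p.2 * pim m (p.1 - p.2)) else 0 := by
  have hsub : Measurable fun p : ℝ × ℝ => p.1 - p.2 := measurable_fst.sub measurable_snd
  exact Measurable.ite (measurableSet_le measurable_snd measurable_fst)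
    ((hw.comp hsub).mul ((hg.measurable.comp measurable_snd).mul
      ((pim_cont hm).measurable.comp hsub))) measurable_const

lemma Psi_int (hm : Ker m C) (hw : Measurable w) (hwb : ∀ θ, |w θ| ≤ Cw)
    (hg : Continuous g) {T : ℝ} (hT : 0 ≤ T) :
    Integrable (fun p : ℝ × ℝ =>
        if p.2 ≤ p.1 then w (p.1 - p.2) * (g p.2 * pim m (p.1 - p.2)) else 0)
      ((volume.restrict (Set.Ioc 0 T)).prod (volume.restrict (Set.Ioc 0 T))) := by
  obtain ⟨Mg, hMg⟩ := (isCompact_Icc (a := (0:ℝ)) (b := T)).exists_bound_of_continuousOn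
    hg.continuousOn
  have hCw : 0 ≤ Cw := (abs_nonneg _).trans (hwb 0)
  have hMg0 : 0 ≤ Mg := (norm_nonneg _).trans (hMg 0 ⟨le_rfl, hT⟩)
  have hdom : Integrable (fun _ : ℝ × ℝ => Cw * Mg)
      ((volume.restrict (Set.Ioc 0 T)).prod (volume.restrict (Set.Ioc 0 T))) := by
    rw [Measure.prod_restrict]
    refine integrableOn_const ?_
    rw [Measure.prod_prod]
    exact (ENNReal.mul_lt_top measure_Ioc_lt_top measure_Ioc_lt_top).ne
  refine hdom.mono' (Psi_meas hm hw hg).aestronglyMeasurable ?_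
  rw [Measure.prod_restrict]
  refine (ae_restrict_iff' (measurableSet_Ioc.prod measurableSet_Ioc)).2
    (ae_of_all _ fun p hp => ?_)
  rw [Real.norm_eq_abs]
  by_cases h : p.2 ≤ p.1
  · rw [if_pos h]
    refine abs_mul3 (hwb _) ?_ ?_
    · simpa [Real.norm_eq_abs] using hMg p.2 ⟨hp.2.1.le, hp.2.2⟩
    · rw [abs_of_nonneg (pim_pos m _).le]
      exact pim_le_one hm (by linarith)
  · rw [if_neg h, abs_zero]
    positivity

lemma Psi_eval (hm : Ker m C) (hw : Measurable w) (hwb : ∀ θ, |w θ| ≤ Cw)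
    (hg : Continuous g) {T u : ℝ} (hu0 : 0 < u) (huT : u ≤ T) :
    (∫ s in Set.Ioc (0:ℝ) T,
        (if s ≤ u then w (u - s) * (g s * pim m (u - s)) else 0)) =
      ∫ s in (0:ℝ)..u, w (u - s) * (g s * pim m (u - s)) := by
  obtain ⟨Mg, hMg⟩ := (isCompact_Icc (a := (0:ℝ)) (b := T)).exists_bound_of_continuousOn
    hg.continuousOn
  have hCw : 0 ≤ Cw := (abs_nonneg _).trans (hwb 0)
  have hMg0 : 0 ≤ Mg := (norm_nonneg _).trans (hMg 0 ⟨le_rfl, le_trans hu0.le huT⟩)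
  have hmeas : Measurable fun s : ℝ =>
      if s ≤ u then w (u - s) * (g s * pim m (u - s)) else 0 := by
    have hsub : Measurable fun s : ℝ => u - s := measurable_const.sub measurable_id
    exact Measurable.ite (measurableSet_le measurable_id measurable_const)
      ((hw.comp hsub).mul (hg.measurable.mul ((pim_cont hm).measurable.comp hsub)))
      measurable_const
  have hbound : ∀ x ∈ Set.Ioc (0:ℝ) T,
      |if x ≤ u then w (u - x) * (g x * pim m (u - x)) else 0| ≤ Cw * Mg := by
    intro x hx
    by_cases h : x ≤ u
    · rw [if_pos h]
      refine abs_mul3 (hwb _) ?_ ?_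
      · simpa [Real.norm_eq_abs] using hMg x ⟨hx.1.le, hx.2⟩
      · rw [abs_of_nonneg (pim_pos m _).le]
        exact pim_le_one hm (by linarith)
    · rw [if_neg h, abs_zero]; positivity
  have hint1 : IntegrableOn (fun s => if s ≤ u then w (u - s) * (g s * pim m (u - s)) else 0)
      (Set.Ioc 0 u) :=
    boundedMeasurable_integrableOn hmeas measurableSet_Ioc measure_Ioc_lt_top
      (fun x hx => hbound x ⟨hx.1, hx.2.trans huT⟩)
  have hint2 : IntegrableOn (fun s => if s ≤ u then w (u - s) * (g s * pim m (u - s)) else 0)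
      (Set.Ioc u T) :=
    boundedMeasurable_integrableOn hmeas measurableSet_Ioc measure_Ioc_lt_top
      (fun x hx => hbound x ⟨lt_trans hu0 hx.1, hx.2⟩)
  have hsplit : Set.Ioc (0:ℝ) T = Set.Ioc 0 u ∪ Set.Ioc u T :=
    (Set.Ioc_union_Ioc_eq_Ioc hu0.le huT).symm
  rw [hsplit, setIntegral_union (Set.Ioc_disjoint_Ioc_of_le le_rfl) measurableSet_Ioc hint1 hint2]
  have h2 : (∫ s in Set.Ioc u T,
      (if s ≤ u then w (u - s) * (g s * pim m (u - s)) else 0)) = 0 := by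
    rw [setIntegral_congr_fun measurableSet_Ioc
      (g := fun _ => (0:ℝ)) (fun s hs => if_neg (not_le.2 hs.1))]
    simp
  have h1 : (∫ s in Set.Ioc (0:ℝ) u,
      (if s ≤ u then w (u - s) * (g s * pim m (u - s)) else 0)) =
      ∫ s in (0:ℝ)..u, w (u - s) * (g s * pim m (u - s)) := by
    rw [setIntegral_congr_fun measurableSet_Ioc
      (g := fun s => w (u - s) * (g s * pim m (u - s))) (fun s hs => if_pos hs.2),
      ← intervalIntegral.integral_of_le hu0.le]
  rw [h1, h2, add_zero]

lemma IocP_integrableOn (hm : Ker m C) (hw : Measurable w) (hwb : ∀ θ, |w θ| ≤ Cw)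
    (hg : Continuous g) {T : ℝ} (hT : 0 ≤ T) :
    IntegrableOn (fun u => ∫ s in (0:ℝ)..u, w (u - s) * (g s * pim m (u - s)))
      (Set.Ioc 0 T) := by
  have hmarg := (Psi_int hm hw hwb hg hT).integral_prod_left
  refine hmarg.congr ?_
  refine (ae_restrict_iff' measurableSet_Ioc).2 (ae_of_all _ fun u hu => ?_)
  simpa using Psi_eval hm hw hwb hg hu.1 hu.2

/-- integrability of the weighted density integral as a function of time -/
lemma Dw_integrableOn (hm : Ker m C) (hw : Measurable w) (hwb : ∀ θ, |w θ| ≤ Cw)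
    (hf0m : Measurable f0) (hf0 : IntegrableOn f0 (Set.Ioi 0)) (hg : Continuous g)
    {T : ℝ} (hT : 0 ≤ T) :
    IntegrableOn (fun u => ∫ θ in Set.Ioi (0:ℝ), w θ * dens (pim m) f0 g u θ)
      (Set.Ioc 0 T) := by
  refine ((IoiP_integrableOn hm hw hwb hf0m hf0 hT).add
    (IocP_integrableOn hm hw hwb hg hT)).congr ?_
  refine (ae_restrict_iff' measurableSet_Ioc).2 (ae_of_all _ fun u hu => ?_)
  exact (dens_split hm hw hwb hf0m hf0 hg hu.1.le).symm

lemma Dw_intervalIntegrable (hm : Ker m C) (hw : Measurable w) (hwb : ∀ θ, |w θ| ≤ Cw)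
    (hf0m : Measurable f0) (hf0 : IntegrableOn f0 (Set.Ioi 0)) (hg : Continuous g)
    {T : ℝ} (hT : 0 ≤ T) :
    IntervalIntegrable (fun u => ∫ θ in Set.Ioi (0:ℝ), w θ * dens (pim m) f0 g u θ)
      volume 0 T := by
  rw [intervalIntegrable_iff, Set.uIoc_of_le hT]
  exact Dw_integrableOn hm hw hwb hf0m hf0 hg hT

end Fubini

section Evolution
variable {m f0 g : ℝ → ℝ} {C : ℝ}

lemma Psi_eval2 (hm : Ker m C) (hw : Measurable w) (hwb : ∀ θ, |w θ| ≤ Cw)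
    (hg : Continuous g) {T s : ℝ} (hs0 : 0 < s) (hsT : s ≤ T) :
    (∫ u in Set.Ioc (0:ℝ) T,
        (if s ≤ u then w (u - s) * (g s * pim m (u - s)) else 0)) =
      ∫ u in s..T, w (u - s) * (g s * pim m (u - s)) := by
  have hCw : 0 ≤ Cw := (abs_nonneg _).trans (hwb 0)
  have hMg0 : 0 ≤ |g s| := abs_nonneg _
  have hmeas : Measurable fun u : ℝ =>
      if s ≤ u then w (u - s) * (g s * pim m (u - s)) else 0 := by
    have hsub : Measurable fun u : ℝ => u - s := measurable_id.sub measurable_const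
    exact Measurable.ite (measurableSet_le measurable_const measurable_id)
      ((hw.comp hsub).mul (measurable_const.mul ((pim_cont hm).measurable.comp hsub)))
      measurable_const
  have hbound : ∀ x ∈ Set.Ioc (0:ℝ) T,
      |if s ≤ x then w (x - s) * (g s * pim m (x - s)) else 0| ≤ Cw * |g s| := by
    intro x hx
    by_cases h : s ≤ x
    · rw [if_pos h]
      refine abs_mul3 (hwb _) le_rfl ?_
      rw [abs_of_nonneg (pim_pos m _).le]
      exact pim_le_one hm (by linarith)
    · rw [if_neg h, abs_zero]; positivity
  have hint1 : IntegrableOn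
      (fun u => if s ≤ u then w (u - s) * (g s * pim m (u - s)) else 0) (Set.Ioc 0 s) :=
    boundedMeasurable_integrableOn hmeas measurableSet_Ioc measure_Ioc_lt_top
      (fun x hx => hbound x ⟨hx.1, hx.2.trans hsT⟩)
  have hint2 : IntegrableOn
      (fun u => if s ≤ u then w (u - s) * (g s * pim m (u - s)) else 0) (Set.Ioc s T) :=
    boundedMeasurable_integrableOn hmeas measurableSet_Ioc measure_Ioc_lt_top
      (fun x hx => hbound x ⟨lt_trans hs0 hx.1, hx.2⟩)
  have hsplit : Set.Ioc (0:ℝ) T = Set.Ioc 0 s ∪ Set.Ioc s T :=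
    (Set.Ioc_union_Ioc_eq_Ioc hs0.le hsT).symm
  rw [hsplit, setIntegral_union (Set.Ioc_disjoint_Ioc_of_le le_rfl) measurableSet_Ioc hint1 hint2]
  have h2 : (∫ u in Set.Ioc (0:ℝ) s,
      (if s ≤ u then w (u - s) * (g s * pim m (u - s)) else 0)) = 0 := by
    rw [integral_Ioc_eq_integral_Ioo,
      setIntegral_congr_fun measurableSet_Ioo
        (g := fun _ => (0:ℝ)) (fun u hu => if_neg (not_le.2 hu.2))]
    simp
  have h1 : (∫ u in Set.Ioc s T,
      (if s ≤ u then w (u - s) * (g s * pim m (u - s)) else 0)) =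
      ∫ u in s..T, w (u - s) * (g s * pim m (u - s)) := by
    rw [setIntegral_congr_fun measurableSet_Ioc
      (g := fun u => w (u - s) * (g s * pim m (u - s))) (fun u hu => if_pos hu.1.le),
      ← intervalIntegral.integral_of_le hsT]
  rw [h1, h2, zero_add]

/-- the master integral identity: evolution of the total density. -/
lemma dens_evolution (hm : Ker m C) (hf0m : Measurable f0)
    (hf0 : IntegrableOn f0 (Set.Ioi 0)) (hg : Continuous g) {t : ℝ} (ht : 0 ≤ t) :
    (∫ θ in Set.Ioi (0:ℝ), dens (pim m) f0 g t θ) =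
      (∫ θ in Set.Ioi (0:ℝ), f0 θ) +
      ∫ u in (0:ℝ)..t, (g u - ∫ θ in Set.Ioi (0:ℝ), m θ * dens (pim m) f0 g u θ) := by
  have hmb : ∀ θ, |m θ| ≤ C := fun θ => by
    rw [abs_of_nonneg (hm.nn θ)]; exact hm.le θ
  have h1b : ∀ _θ : ℝ, |(1:ℝ)| ≤ (1:ℝ) := fun _ => by norm_num
  -- step 1 : split the density integral
  have h1 := dens_split (w := fun _ => (1:ℝ)) (Cw := 1) hm measurable_const h1b hf0m hf0 hg ht
  simp only [one_mul] at h1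
  -- Term A
  have hpt : ∀ s : ℝ, f0 s * (pim m (t + s) / pim m s) =
      f0 s - ∫ u in (0:ℝ)..t, m (u + s) * (f0 s * (pim m (u + s) / pim m s)) := by
    intro s
    have hftc : pim m s - pim m (t + s) = ∫ θ in s..(t + s), m θ * pim m θ :=
      expFTC hm (by linarith)
    have hshift : (∫ u in (0:ℝ)..t, m (u + s) * pim m (u + s)) =
        ∫ θ in s..(t + s), m θ * pim m θ := by
      have := intervalIntegral.integral_comp_add_right
        (fun θ => m θ * pim m θ) s (a := 0) (b := t)
      simpa using this
    have hpull : (∫ u in (0:ℝ)..t, m (u + s) * (f0 s * (pim m (u + s) / pim m s))) =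
        (f0 s / pim m s) * ∫ u in (0:ℝ)..t, m (u + s) * pim m (u + s) := by
      rw [← intervalIntegral.integral_const_mul]
      exact intervalIntegral.integral_congr fun u _ => by ring
    rw [hpull, hshift, ← hftc]
    have hps := (pim_pos m s).ne'
    field_simp
    ring
  have hPhi := Phi_int (w := m) hm hm.meas hmb hf0m hf0 ht
  have hinner : IntegrableOn
      (fun s => ∫ u in (0:ℝ)..t, m (u + s) * (f0 s * (pim m (u + s) / pim m s)))
      (Set.Ioi 0) := by
    have := hPhi.integral_prod_right
    refine this.congr ((ae_restrict_iff' measurableSet_Ioi).2 (ae_of_all _ fun s _ => ?_))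
    show (∫ u in Set.Ioc (0:ℝ) t, m (u + s) * (f0 s * (pim m (u + s) / pim m s))) =
      ∫ u in (0:ℝ)..t, m (u + s) * (f0 s * (pim m (u + s) / pim m s))
    rw [intervalIntegral.integral_of_le ht]
  have hswapA : (∫ s in Set.Ioi (0:ℝ),
        ∫ u in (0:ℝ)..t, m (u + s) * (f0 s * (pim m (u + s) / pim m s))) =
      ∫ u in (0:ℝ)..t, ∫ s in Set.Ioi (0:ℝ), m (u + s) * (f0 s * (pim m (u + s) / pim m s)) := by
    have hswap := integral_integral_swap
      (f := fun u s => m (u + s) * (f0 s * (pim m (u + s) / pim m s)))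
      (μ := volume.restrict (Set.Ioc 0 t)) (ν := volume.restrict (Set.Ioi 0)) hPhi
    calc (∫ s in Set.Ioi (0:ℝ),
          ∫ u in (0:ℝ)..t, m (u + s) * (f0 s * (pim m (u + s) / pim m s)))
        = ∫ s in Set.Ioi (0:ℝ), ∫ u in Set.Ioc (0:ℝ) t,
            m (u + s) * (f0 s * (pim m (u + s) / pim m s)) := by
          refine setIntegral_congr_fun measurableSet_Ioi (fun s _ => ?_)
          rw [intervalIntegral.integral_of_le ht]
      _ = ∫ u in Set.Ioc (0:ℝ) t, ∫ s in Set.Ioi (0:ℝ),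
            m (u + s) * (f0 s * (pim m (u + s) / pim m s)) := hswap.symm
      _ = ∫ u in (0:ℝ)..t, ∫ s in Set.Ioi (0:ℝ),
            m (u + s) * (f0 s * (pim m (u + s) / pim m s)) :=
          (intervalIntegral.integral_of_le ht).symm
  have termA : (∫ s in Set.Ioi (0:ℝ), f0 s * (pim m (t + s) / pim m s)) =
      (∫ θ in Set.Ioi (0:ℝ), f0 θ) -
        ∫ u in (0:ℝ)..t, ∫ s in Set.Ioi (0:ℝ),
          m (u + s) * (f0 s * (pim m (u + s) / pim m s)) := by
    rw [setIntegral_congr_fun measurableSet_Ioi (g := fun s =>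
        f0 s - ∫ u in (0:ℝ)..t, m (u + s) * (f0 s * (pim m (u + s) / pim m s)))
        (fun s _ => hpt s),
      integral_sub hf0 hinner, hswapA]
  -- Term B
  have hptB : ∀ s ∈ Set.uIcc (0:ℝ) t, g s * pim m (t - s) =
      g s - ∫ u in s..t, m (u - s) * (g s * pim m (u - s)) := by
    intro s hs
    rw [Set.uIcc_of_le ht] at hs
    have hftc : pim m 0 - pim m (t - s) = ∫ θ in (0:ℝ)..(t - s), m θ * pim m θ :=
      expFTC hm (by linarith [hs.2])
    rw [pim_zero] at hftc
    have hshift : (∫ u in s..t, m (u - s) * pim m (u - s)) =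
        ∫ θ in (0:ℝ)..(t - s), m θ * pim m θ := by
      have := intervalIntegral.integral_comp_sub_right
        (fun θ => m θ * pim m θ) s (a := s) (b := t)
      simpa using this
    have hpull : (∫ u in s..t, m (u - s) * (g s * pim m (u - s))) =
        g s * ∫ u in s..t, m (u - s) * pim m (u - s) := by
      rw [← intervalIntegral.integral_const_mul]
      exact intervalIntegral.integral_congr fun u _ => by ring
    rw [hpull, hshift, ← hftc]
    ring
  have hPsi := Psi_int (w := m) hm hm.meas hmb hg ht
  have hinnerB : IntegrableOn
      (fun s => ∫ u in s..t, m (u - s) * (g s * pim m (u - s))) (Set.Ioc 0 t) := by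
    have := hPsi.integral_prod_right
    refine this.congr ((ae_restrict_iff' measurableSet_Ioc).2 (ae_of_all _ fun s hs => ?_))
    show (∫ u in Set.Ioc (0:ℝ) t,
        (if s ≤ u then m (u - s) * (g s * pim m (u - s)) else 0)) = _
    exact Psi_eval2 (w := m) hm hm.meas hmb hg hs.1 hs.2
  have hswapB : (∫ s in Set.Ioc (0:ℝ) t, ∫ u in s..t, m (u - s) * (g s * pim m (u - s))) =
      ∫ u in Set.Ioc (0:ℝ) t, ∫ s in (0:ℝ)..u, m (u - s) * (g s * pim m (u - s)) := by
    have hswap := integral_integral_swap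
      (f := fun u s => if s ≤ u then m (u - s) * (g s * pim m (u - s)) else 0)
      (μ := volume.restrict (Set.Ioc 0 t)) (ν := volume.restrict (Set.Ioc 0 t)) hPsi
    calc (∫ s in Set.Ioc (0:ℝ) t, ∫ u in s..t, m (u - s) * (g s * pim m (u - s)))
        = ∫ s in Set.Ioc (0:ℝ) t, ∫ u in Set.Ioc (0:ℝ) t,
            (if s ≤ u then m (u - s) * (g s * pim m (u - s)) else 0) := by
          refine setIntegral_congr_fun measurableSet_Ioc (fun s hs => ?_)
          exact (Psi_eval2 (w := m) hm hm.meas hmb hg hs.1 hs.2).symm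
      _ = ∫ u in Set.Ioc (0:ℝ) t, ∫ s in Set.Ioc (0:ℝ) t,
            (if s ≤ u then m (u - s) * (g s * pim m (u - s)) else 0) := hswap.symm
      _ = ∫ u in Set.Ioc (0:ℝ) t, ∫ s in (0:ℝ)..u, m (u - s) * (g s * pim m (u - s)) := by
          refine setIntegral_congr_fun measurableSet_Ioc (fun u hu => ?_)
          exact Psi_eval (w := m) hm hm.meas hmb hg hu.1 hu.2
  have termB : (∫ s in (0:ℝ)..t, g s * pim m (t - s)) =
      (∫ u in (0:ℝ)..t, g u) -
        ∫ u in (0:ℝ)..t, ∫ s in (0:ℝ)..u, m (u - s) * (g s * pim m (u - s)) := by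
    have hinnerB' : IntervalIntegrable
        (fun s => ∫ u in s..t, m (u - s) * (g s * pim m (u - s))) volume 0 t := by
      rw [intervalIntegrable_iff, Set.uIoc_of_le ht]; exact hinnerB
    have hsub_eq : (∫ s in (0:ℝ)..t, ∫ u in s..t, m (u - s) * (g s * pim m (u - s))) =
        ∫ u in (0:ℝ)..t, ∫ s in (0:ℝ)..u, m (u - s) * (g s * pim m (u - s)) := by
      rw [intervalIntegral.integral_of_le ht, hswapB, ← intervalIntegral.integral_of_le ht]
    rw [intervalIntegral.integral_congr hptB,
      intervalIntegral.integral_sub (hg.intervalIntegrable 0 t) hinnerB', hsub_eq]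
  -- combine
  have hIoiInt : IntervalIntegrable
      (fun u => ∫ s in Set.Ioi (0:ℝ), m (u + s) * (f0 s * (pim m (u + s) / pim m s)))
      volume 0 t := by
    rw [intervalIntegrable_iff, Set.uIoc_of_le ht]
    exact IoiP_integrableOn (w := m) hm hm.meas hmb hf0m hf0 ht
  have hIocInt : IntervalIntegrable
      (fun u => ∫ s in (0:ℝ)..u, m (u - s) * (g s * pim m (u - s))) volume 0 t := by
    rw [intervalIntegrable_iff, Set.uIoc_of_le ht]
    exact IocP_integrableOn (w := m) hm hm.meas hmb hg ht
  have hDm : (∫ u in (0:ℝ)..t,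
      (g u - ∫ θ in Set.Ioi (0:ℝ), m θ * dens (pim m) f0 g u θ)) =
      (∫ u in (0:ℝ)..t, g u) -
        ((∫ u in (0:ℝ)..t, ∫ s in Set.Ioi (0:ℝ),
            m (u + s) * (f0 s * (pim m (u + s) / pim m s))) +
          ∫ u in (0:ℝ)..t, ∫ s in (0:ℝ)..u, m (u - s) * (g s * pim m (u - s))) := by
    have hDmInt : IntervalIntegrable
        (fun u => ∫ θ in Set.Ioi (0:ℝ), m θ * dens (pim m) f0 g u θ) volume 0 t :=
      Dw_intervalIntegrable hm hm.meas hmb hf0m hf0 hg ht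
    rw [intervalIntegral.integral_sub (hg.intervalIntegrable 0 t) hDmInt]
    congr 1
    rw [← intervalIntegral.integral_add hIoiInt hIocInt]
    refine intervalIntegral.integral_congr (fun u hu => ?_)
    rw [Set.uIcc_of_le ht] at hu
    exact dens_split (w := m) hm hm.meas hmb hf0m hf0 hg hu.1
  rw [h1, termA, termB, hDm]
  ring

end Evolution

section Continuity
variable {m f0 g : ℝ → ℝ} {C : ℝ}

lemma contA (hm : Ker m C) (hf0m : Measurable f0) (hf0 : IntegrableOn f0 (Set.Ioi 0)) :
    ContinuousOn (fun t => ∫ s in Set.Ioi (0:ℝ), f0 s * (pim m (t + s) / pim m s))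
      (Set.Ici 0) := by
  intro t₀ ht₀
  refine continuousWithinAt_of_dominated (bound := fun s => |f0 s|) ?_ ?_ hf0.abs ?_
  · refine Filter.Eventually.of_forall (fun t => ?_)
    exact ((hf0m.mul (((pim_cont hm).measurable.comp (measurable_const.add measurable_id)).div
      (pim_cont hm).measurable))).aestronglyMeasurable
  · refine eventually_nhdsWithin_of_forall (fun t (ht : 0 ≤ t) => ?_)
    refine (ae_restrict_iff' measurableSet_Ioi).2 (ae_of_all _ fun s _ => ?_)
    rw [Real.norm_eq_abs, abs_mul]
    calc |f0 s| * |pim m (t + s) / pim m s| ≤ |f0 s| * 1 := by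
          refine mul_le_mul_of_nonneg_left ?_ (abs_nonneg _)
          rw [abs_of_nonneg (pim_div_nonneg m _ _)]
          exact pim_div_le_one hm (by linarith)
      _ = |f0 s| := mul_one _
  · refine ae_of_all _ fun s => ?_
    exact ((continuous_const.mul (((pim_cont hm).comp
      (continuous_id.add continuous_const)).div_const _)).continuousAt).continuousWithinAt

lemma contB (hm : Ker m C) (hg : Continuous g) :
    ContinuousOn
      (fun t => ∫ s in Set.Ioi (0:ℝ), (if s ≤ t then g s * pim m (t - s) else 0))
      (Set.Ici 0) := by
  intro t₀ ht₀
  obtain ⟨Mg, hMg⟩ := (isCompact_Icc (a := (0:ℝ)) (b := t₀ + 1)).exists_bound_of_continuousOn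
    hg.continuousOn
  have hMg0 : 0 ≤ Mg := (norm_nonneg _).trans (hMg 0 ⟨le_rfl, by linarith [ht₀.out]⟩)
  refine continuousWithinAt_of_dominated
    (bound := (Set.Ioc (0:ℝ) (t₀ + 1)).indicator fun _ => Mg) ?_ ?_ ?_ ?_
  · refine Filter.Eventually.of_forall (fun t => ?_)
    refine (Measurable.ite (measurableSet_le measurable_id measurable_const)
      (hg.measurable.mul ((pim_cont hm).measurable.comp
        (measurable_const.sub measurable_id))) measurable_const).aestronglyMeasurable
  · have hev : ∀ᶠ t in nhdsWithin t₀ (Set.Ici 0), t ∈ Set.Icc 0 (t₀ + 1) := by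
      refine Filter.eventually_inf_principal.2 ?_
      have : ∀ᶠ t in nhds t₀, t < t₀ + 1 :=
        Filter.Tendsto.eventually_lt_const (by linarith) Filter.tendsto_id
      exact this.mono (fun t h1 (h2 : t ∈ Set.Ici 0) => ⟨h2, h1.le⟩)
    refine hev.mono (fun t htmem => ?_)
    refine (ae_restrict_iff' measurableSet_Ioi).2 (ae_of_all _ fun s hs => ?_)
    rw [Real.norm_eq_abs]
    by_cases h : s ≤ t
    · rw [if_pos h, Set.indicator_of_mem (Set.mem_Ioc.2 ⟨hs, h.trans htmem.2⟩)]
      rw [abs_mul]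
      calc |g s| * |pim m (t - s)| ≤ Mg * 1 := by
            refine mul_le_mul ?_ ?_ (abs_nonneg _) hMg0
            · simpa [Real.norm_eq_abs] using hMg s ⟨hs.out.le, h.trans htmem.2⟩
            · rw [abs_of_nonneg (pim_pos m _).le]
              exact pim_le_one hm (by linarith)
        _ = Mg := mul_one _
    · rw [if_neg h, abs_zero]
      exact Set.indicator_nonneg (fun _ _ => hMg0) _
  · exact (integrable_indicator_iff measurableSet_Ioc).2
      (integrableOn_const measure_Ioc_lt_top.ne)
  · have hne : ∀ᵐ s ∂volume.restrict (Set.Ioi (0:ℝ)), s ≠ t₀ := by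
      refine ae_restrict_of_ae ?_
      rw [ae_iff]
      have : {a : ℝ | ¬a ≠ t₀} = {t₀} := by ext x; simp
      rw [this]
      exact measure_singleton t₀
    refine hne.mono (fun s hs => ?_)
    rcases lt_or_gt_of_ne hs with hlt | hgt
    · -- s < t₀ : eventually s ≤ t
      have hev : (fun t => if s ≤ t then g s * pim m (t - s) else 0) =ᶠ[nhds t₀]
          fun t => g s * pim m (t - s) := by
        have : ∀ᶠ t in nhds t₀, s < t :=
          Filter.Tendsto.eventually_const_lt hlt Filter.tendsto_id
        exact this.mono (fun t ht => if_pos ht.le)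
      exact (((continuous_const.mul ((pim_cont hm).comp
        (continuous_id.sub continuous_const))).continuousAt).congr
        hev.symm).continuousWithinAt
    · -- s > t₀ : eventually s > t
      have hev : (fun t => if s ≤ t then g s * pim m (t - s) else 0) =ᶠ[nhds t₀]
          fun _ => (0:ℝ) := by
        have : ∀ᶠ t in nhds t₀, t < s :=
          Filter.Tendsto.eventually_lt_const hgt Filter.tendsto_id
        exact this.mono (fun t ht => if_neg (not_le.2 ht))
      exact ((continuousAt_const.congr hev.symm)).continuousWithinAt

lemma dens_cont (hm : Ker m C) (hf0m : Measurable f0) (hf0 : IntegrableOn f0 (Set.Ioi 0))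
    (hg : Continuous g) :
    ContinuousOn (fun t => ∫ θ in Set.Ioi (0:ℝ), dens (pim m) f0 g t θ) (Set.Ici 0) := by
  have h1b : ∀ _θ : ℝ, |(1:ℝ)| ≤ (1:ℝ) := fun _ => by norm_num
  refine ContinuousOn.congr ((contA hm hf0m hf0).add (contB hm hg)) (fun t (ht : 0 ≤ t) => ?_)
  have h1 := dens_split (w := fun _ => (1:ℝ)) (Cw := 1) hm measurable_const h1b hf0m hf0 hg ht
  simp only [one_mul] at h1
  rw [h1]
  congr 1
  rw [intervalIntegral.integral_of_le ht]
  symm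
  calc (∫ s in Set.Ioi (0:ℝ), (if s ≤ t then g s * pim m (t - s) else 0))
      = ∫ s in Set.Ioi (0:ℝ), (Set.Iic t).indicator (fun s => g s * pim m (t - s)) s := by
        refine setIntegral_congr_fun measurableSet_Ioi (fun s _ => ?_)
        by_cases h : s ≤ t
        · rw [if_pos h, Set.indicator_of_mem (Set.mem_Iic.2 h)]
        · rw [if_neg h, Set.indicator_of_notMem (by simpa using h)]
    _ = ∫ s in Set.Ioi 0 ∩ Set.Iic t, g s * pim m (t - s) :=
        setIntegral_indicator measurableSet_Iic
    _ = ∫ s in Set.Ioc (0:ℝ) t, g s * pim m (t - s) := by rw [Set.Ioi_inter_Iic]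

end Continuity

section Helpers
variable {m w f0 g : ℝ → ℝ} {C Cw : ℝ}

/-- integrability of the shifted initial part on `Ioi 0` (single time). -/
lemma shift_integrableOn (hm : Ker m C) (hw : Measurable w) (hwb : ∀ θ, |w θ| ≤ Cw)
    (hf0m : Measurable f0) (hf0 : IntegrableOn f0 (Set.Ioi 0)) {u : ℝ} (hu : 0 ≤ u) :
    IntegrableOn (fun s => w (u + s) * (f0 s * (pim m (u + s) / pim m s))) (Set.Ioi 0) := by
  have hmeas : Measurable fun s => w (u + s) * (f0 s * (pim m (u + s) / pim m s)) := by
    have hadd : Measurable fun s : ℝ => u + s := measurable_const.add measurable_id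
    exact (hw.comp hadd).mul (hf0m.mul
      (((pim_cont hm).measurable.comp hadd).div (pim_cont hm).measurable))
  refine Integrable.mono' ((hf0.abs).const_mul Cw) hmeas.aestronglyMeasurable ?_
  refine (ae_restrict_iff' measurableSet_Ioi).2 (ae_of_all _ fun s _ => ?_)
  rw [Real.norm_eq_abs]
  refine abs_mul3 (hwb _) le_rfl ?_
  rw [abs_of_nonneg (pim_div_nonneg m _ _)]
  exact pim_div_le_one hm (by linarith)

/-- interval integrability of the convolution part (single time). -/
lemma conv_intInt (hm : Ker m C) (hw : Measurable w) (hwb : ∀ θ, |w θ| ≤ Cw)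
    (hg : Continuous g) {u : ℝ} (hu : 0 ≤ u) :
    IntervalIntegrable (fun s => w (u - s) * (g s * pim m (u - s))) volume 0 u := by
  obtain ⟨Mg, hMg⟩ := (isCompact_Icc (a := (0:ℝ)) (b := u)).exists_bound_of_continuousOn
    hg.continuousOn
  rw [intervalIntegrable_iff, Set.uIoc_of_le hu]
  have hsub : Measurable fun s : ℝ => u - s := measurable_const.sub measurable_id
  refine boundedMeasurable_integrableOn
    (((hw.comp hsub)).mul (hg.measurable.mul ((pim_cont hm).measurable.comp hsub)))
    measurableSet_Ioc measure_Ioc_lt_top (D := Cw * Mg) ?_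
  intro s hs
  refine abs_mul3 (hwb _) ?_ ?_
  · simpa [Real.norm_eq_abs] using hMg s ⟨hs.1.le, hs.2⟩
  · rw [abs_of_nonneg (pim_pos m _).le]
    exact pim_le_one hm (by linarith [hs.2])

/-- transfer between the original survival kernels/data and the normalized ones. -/
lemma dens_transfer {π1 : ℝ → ℝ} (hπ : ∀ θ, 0 ≤ θ → π1 θ = pim m θ)
    {f0 f0' : ℝ → ℝ} (hf : f0 =ᵐ[volume.restrict (Set.Ioi 0)] f0')
    {g1 g2 : ℝ → ℝ} (hg12 : ∀ u, 0 ≤ u → g1 u = g2 u) {t : ℝ} (ht : 0 ≤ t) :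
    (fun θ => dens π1 f0 g1 t θ) =ᵐ[volume.restrict (Set.Ioi 0)]
      fun θ => dens (pim m) f0' g2 t θ := by
  have hf' : ∀ᵐ x ∂(volume : Measure ℝ), x ∈ Set.Ioi (0:ℝ) → f0 x = f0' x :=
    ae_imp_of_ae_restrict hf
  have hshift : ∀ᵐ θ ∂(volume : Measure ℝ), θ - t ∈ Set.Ioi (0:ℝ) → f0 (θ - t) = f0' (θ - t) := by
    rw [ae_iff] at hf' ⊢
    have heq : {θ : ℝ | ¬(θ - t ∈ Set.Ioi (0:ℝ) → f0 (θ - t) = f0' (θ - t))} =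
        (fun θ : ℝ => θ + -t) ⁻¹' {x : ℝ | ¬(x ∈ Set.Ioi (0:ℝ) → f0 x = f0' x)} := by
      ext θ; simp [sub_eq_add_neg]
    rw [heq, measure_preimage_add_right]
    exact hf'
  have hmem : ∀ᵐ θ ∂volume.restrict (Set.Ioi (0:ℝ)), θ ∈ Set.Ioi (0:ℝ) :=
    ae_restrict_mem measurableSet_Ioi
  filter_upwards [ae_restrict_of_ae hshift, hmem] with θ hθ hθ0
  show dens π1 f0 g1 t θ = dens (pim m) f0' g2 t θ
  by_cases h : t < θ
  · have h1 : dens π1 f0 g1 t θ = f0 (θ - t) * π1 θ / π1 (θ - t) := if_pos h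
    have h2 : dens (pim m) f0' g2 t θ = f0' (θ - t) * pim m θ / pim m (θ - t) := if_pos h
    rw [h1, h2, hπ θ (by linarith), hπ (θ - t) (by linarith),
      hθ (by simp [sub_pos]; linarith)]
  · have h1 : dens π1 f0 g1 t θ = g1 (t - θ) * π1 θ := if_neg h
    have h2 : dens (pim m) f0' g2 t θ = g2 (t - θ) * pim m θ := if_neg h
    rw [h1, h2, hπ θ (le_of_lt hθ0), hg12 (t - θ) (by linarith [not_lt.1 h])]

/-- variation-of-constants derivative. -/
lemma VoC_deriv {h q : ℝ → ℝ} (hh : Continuous h) (hq : Continuous q) (A t : ℝ) :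
    HasDerivAt (fun t => Real.exp (-(∫ v in (0:ℝ)..t, h v)) *
        (A + ∫ s in (0:ℝ)..t, q s * Real.exp (∫ v in (0:ℝ)..s, h v)))
      (q t - h t * (Real.exp (-(∫ v in (0:ℝ)..t, h v)) *
        (A + ∫ s in (0:ℝ)..t, q s * Real.exp (∫ v in (0:ℝ)..s, h v)))) t := by
  have hH : HasDerivAt (fun u => ∫ v in (0:ℝ)..u, h v) (h t) t :=
    intervalIntegral.integral_hasDerivAt_right (hh.intervalIntegrable 0 t)
      hh.stronglyMeasurable.stronglyMeasurableAtFilter hh.continuousAt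
  have hE : HasDerivAt (fun u => Real.exp (-(∫ v in (0:ℝ)..u, h v)))
      (Real.exp (-(∫ v in (0:ℝ)..t, h v)) * -h t) t := hH.neg.exp
  have hIc : Continuous fun s => q s * Real.exp (∫ v in (0:ℝ)..s, h v) :=
    hq.mul (Real.continuous_exp.comp
      (intervalIntegral.continuous_primitive (fun a b => hh.intervalIntegrable a b) 0))
  have hI : HasDerivAt (fun u => ∫ s in (0:ℝ)..u, q s * Real.exp (∫ v in (0:ℝ)..s, h v))
      (q t * Real.exp (∫ v in (0:ℝ)..t, h v)) t :=
    intervalIntegral.integral_hasDerivAt_right (hIc.intervalIntegrable 0 t)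
      hIc.stronglyMeasurable.stronglyMeasurableAtFilter hIc.continuousAt
  have hprod := hE.mul (hI.const_add A)
  refine hprod.congr_deriv (Eq.symm ?_)
  have hcancel : Real.exp (-(∫ v in (0:ℝ)..t, h v)) * Real.exp (∫ v in (0:ℝ)..t, h v) = 1 := by
    rw [← Real.exp_add]; simp
  linear_combination (-q t) * hcancel

/-- variation-of-constants integral identity. -/
lemma VoC_integral {h q : ℝ → ℝ} (hh : Continuous h) (hq : Continuous q) (A : ℝ) (t : ℝ) :
    Real.exp (-(∫ v in (0:ℝ)..t, h v)) *
        (A + ∫ s in (0:ℝ)..t, q s * Real.exp (∫ v in (0:ℝ)..s, h v)) =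
      A + ∫ u in (0:ℝ)..t, (q u - h u *
        (Real.exp (-(∫ v in (0:ℝ)..u, h v)) *
          (A + ∫ s in (0:ℝ)..u, q s * Real.exp (∫ v in (0:ℝ)..s, h v)))) := by
  have hVcont : Continuous fun u => Real.exp (-(∫ v in (0:ℝ)..u, h v)) *
      (A + ∫ s in (0:ℝ)..u, q s * Real.exp (∫ v in (0:ℝ)..s, h v)) := by
    have hprim : Continuous fun u => ∫ v in (0:ℝ)..u, h v :=
      intervalIntegral.continuous_primitive (fun a b => hh.intervalIntegrable a b) 0
    have hIc : Continuous fun s => q s * Real.exp (∫ v in (0:ℝ)..s, h v) :=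
      hq.mul (Real.continuous_exp.comp hprim)
    exact (Real.continuous_exp.comp hprim.neg).mul (continuous_const.add
      (intervalIntegral.continuous_primitive (fun a b => hIc.intervalIntegrable a b) 0))
  have hint : IntervalIntegrable (fun u => q u - h u *
      (Real.exp (-(∫ v in (0:ℝ)..u, h v)) *
        (A + ∫ s in (0:ℝ)..u, q s * Real.exp (∫ v in (0:ℝ)..s, h v)))) volume 0 t :=
    (hq.sub (hh.mul hVcont)).intervalIntegrable 0 t
  have := intervalIntegral.integral_eq_sub_of_hasDerivAt
    (f := fun u => Real.exp (-(∫ v in (0:ℝ)..u, h v)) *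
      (A + ∫ s in (0:ℝ)..u, q s * Real.exp (∫ v in (0:ℝ)..s, h v)))
    (fun u _ => VoC_deriv hh hq A u) hint
  rw [this]
  simp

end Helpers

end TPC

open TPC

/-- Conservation of the total population: if
`N0 = S0 + V0 + ∫e0 + ∫a0 + ∫i0 + R_init`, then
`N(t) = S(t) + V(t) + ∫e(t,·) + ∫a(t,·) + ∫i(t,·) + R(t) = N0` for all `t ≥ 0`. -/
theorem total_population_constant
    (μ N0 p ζ ε S0 V0 : ℝ) (βA βI k χ γA γI q ξ e0 a0 i0 : ℝ → ℝ)
    (hμ : 0 < μ) (hN0 : 0 ≤ N0) (hp : 0 ≤ p) (hζ : 0 ≤ ζ) (hε : ε ∈ Set.Icc (0:ℝ) 1)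
    (hβA : CoeffBM βA) (hβI : CoeffBM βI) (hk : CoeffBM k) (hχ : CoeffBM χ)
    (hγA : CoeffBM γA) (hγI : CoeffBM γI) (hq : FracBM q) (hξ : FracBM ξ)
    (he0 : IntegrableOn e0 (Set.Ioi 0)) (ha0 : IntegrableOn a0 (Set.Ioi 0))
    (hi0 : IntegrableOn i0 (Set.Ioi 0))
    (hS0 : 0 ≤ S0) (hV0 : 0 ≤ V0)
    (he0nn : 0 ≤ᵐ[volume.restrict (Set.Ioi (0:ℝ))] e0)
    (ha0nn : 0 ≤ᵐ[volume.restrict (Set.Ioi (0:ℝ))] a0)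
    (hi0nn : 0 ≤ᵐ[volume.restrict (Set.Ioi (0:ℝ))] i0)
    (β α ι : ℝ → ℝ)
    (hsol : VolterraSystem μ N0 p ζ ε S0 V0 βA βI k χ γA γI q ξ e0 a0 i0 β α ι)
    (S V : ℝ → ℝ) (e a i : ℝ → ℝ → ℝ)
    (hS : S = Ssol μ N0 p S0 β)
    (hV : V = Vsol μ N0 p ζ ε S0 V0 β)
    (he : e = dens (piE μ k) e0 (epsTilde μ N0 p ζ ε S0 V0 β))
    (ha : a = dens (piA μ γA ξ χ) a0 α)
    (hi : i = dens (piI μ γI) i0 ι)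
    -- R is the unique C¹ solution of the recovered-compartment ODE
    (R : ℝ → ℝ) (Rinit : ℝ) (hRinit : 0 ≤ Rinit) (hR0 : R 0 = Rinit)
    (hR' : ∀ t, 0 ≤ t → HasDerivWithinAt R
      (ζ * ε * V t +
          (∫ θ in Set.Ioi (0:ℝ), (γA θ * ξ θ * a t θ + γI θ * i t θ)) - μ * R t)
      (Set.Ici 0) t)
    (hN0eq : N0 = S0 + V0 + (∫ θ in Set.Ioi (0:ℝ), e0 θ) + (∫ θ in Set.Ioi (0:ℝ), a0 θ) +
      (∫ θ in Set.Ioi (0:ℝ), i0 θ) + Rinit) :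
    ∀ t, 0 ≤ t →
      S t + V t + (∫ θ in Set.Ioi (0:ℝ), e t θ) + (∫ θ in Set.Ioi (0:ℝ), a t θ) +
        (∫ θ in Set.Ioi (0:ℝ), i t θ) + R t = N0 := by
  classical
  obtain ⟨hβc, hαc, hιc, hVolt⟩ := hsol
  obtain ⟨hkm, ⟨Ck, hCk⟩, hknn⟩ := hk
  obtain ⟨hχm, ⟨Cχ, hCχ⟩, hχnn⟩ := hχ
  obtain ⟨hγAm, ⟨CγA, hCγA⟩, hγAnn⟩ := hγA
  obtain ⟨hγIm, ⟨CγI, hCγI⟩, hγInn⟩ := hγI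
  obtain ⟨hqm, hqb⟩ := hq
  obtain ⟨hξm, hξb⟩ := hξ
  have hmaxc : Continuous fun u : ℝ => max u 0 := continuous_id.max continuous_const
  have hmaxm : Measurable fun u : ℝ => max u 0 := measurable_id.max measurable_const
  have hmaxnn : ∀ u : ℝ, (0:ℝ) ≤ max u 0 := fun u => le_max_right u 0
  have hmax_eq : ∀ u : ℝ, 0 ≤ u → max u 0 = u := fun u hu => max_eq_left hu
  -- normalized kernels
  set mE : ℝ → ℝ := fun τ => k (max τ 0) + μ with hmEdef
  set mA : ℝ → ℝ := fun τ =>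
    γA (max τ 0) * ξ (max τ 0) + χ (max τ 0) * (1 - ξ (max τ 0)) + μ with hmAdef
  set mI : ℝ → ℝ := fun τ => γI (max τ 0) + μ with hmIdef
  have hKE : Ker mE (Ck + μ) := by
    refine ⟨(hkm.comp hmaxm).add measurable_const, fun θ => ?_, fun θ => ?_⟩
    · have := hknn _ (hmaxnn θ); simp only [hmEdef]; linarith
    · have := hCk _ (hmaxnn θ); simp only [hmEdef]; linarith
  have hKA : Ker mA (CγA + Cχ + μ) := by
    refine ⟨(((hγAm.comp hmaxm).mul (hξm.comp hmaxm)).add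
      ((hχm.comp hmaxm).mul (measurable_const.sub (hξm.comp hmaxm)))).add
      measurable_const, fun θ => ?_, fun θ => ?_⟩
    · have h1 := hγAnn _ (hmaxnn θ)
      have h2 := hχnn _ (hmaxnn θ)
      have h3 := hξb _ (hmaxnn θ)
      simp only [hmAdef]
      have e1 : (0:ℝ) ≤ γA (max θ 0) * ξ (max θ 0) := mul_nonneg h1 h3.1
      have e2 : (0:ℝ) ≤ χ (max θ 0) * (1 - ξ (max θ 0)) := mul_nonneg h2 (by linarith [h3.2])
      linarith
    · have h1 := hCγA _ (hmaxnn θ)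
      have h2 := hCχ _ (hmaxnn θ)
      have h3 := hξb _ (hmaxnn θ)
      have h4 := hγAnn _ (hmaxnn θ)
      have h5 := hχnn _ (hmaxnn θ)
      simp only [hmAdef]
      have e1 : γA (max θ 0) * ξ (max θ 0) ≤ CγA := by nlinarith [h3.1, h3.2]
      have e2 : χ (max θ 0) * (1 - ξ (max θ 0)) ≤ Cχ := by nlinarith [h3.1, h3.2]
      linarith
  have hKI : Ker mI (CγI + μ) := by
    refine ⟨(hγIm.comp hmaxm).add measurable_const, fun θ => ?_, fun θ => ?_⟩
    · have := hγInn _ (hmaxnn θ); simp only [hmIdef]; linarith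
    · have := hCγI _ (hmaxnn θ); simp only [hmIdef]; linarith
  -- survival kernel agreement
  have hpiE : ∀ θ : ℝ, 0 ≤ θ → piE μ k θ = pim mE θ := by
    intro θ hθ
    rw [piE, pim, Pm]
    congr 1
    refine congrArg Neg.neg (intervalIntegral.integral_congr fun τ hτ => ?_)
    rw [Set.uIcc_of_le hθ] at hτ
    simp only [hmEdef, hmax_eq τ hτ.1]
  have hpiA : ∀ θ : ℝ, 0 ≤ θ → piA μ γA ξ χ θ = pim mA θ := by
    intro θ hθ
    rw [piA, pim, Pm]
    congr 1
    refine congrArg Neg.neg (intervalIntegral.integral_congr fun τ hτ => ?_)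
    rw [Set.uIcc_of_le hθ] at hτ
    simp only [hmAdef, hmax_eq τ hτ.1]
  have hpiI : ∀ θ : ℝ, 0 ≤ θ → piI μ γI θ = pim mI θ := by
    intro θ hθ
    rw [piI, pim, Pm]
    congr 1
    refine congrArg Neg.neg (intervalIntegral.integral_congr fun τ hτ => ?_)
    rw [Set.uIcc_of_le hθ] at hτ
    simp only [hmIdef, hmax_eq τ hτ.1]
  -- weights
  set wkq : ℝ → ℝ := fun θ => k (max θ 0) * q (max θ 0) with hwkqdef
  set wk1q : ℝ → ℝ := fun θ => k (max θ 0) * (1 - q (max θ 0)) with hwk1qdef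
  set wAξ : ℝ → ℝ := fun θ => γA (max θ 0) * ξ (max θ 0) with hwAξdef
  set wχ : ℝ → ℝ := fun θ => χ (max θ 0) * (1 - ξ (max θ 0)) with hwχdef
  set wγI : ℝ → ℝ := fun θ => γI (max θ 0) with hwγIdef
  have hwkqm : Measurable wkq := (hkm.comp hmaxm).mul (hqm.comp hmaxm)
  have hwkqb : ∀ θ, |wkq θ| ≤ Ck := by
    intro θ
    have h1 := hknn _ (hmaxnn θ); have h2 := hCk _ (hmaxnn θ); have h3 := hqb _ (hmaxnn θ)
    rw [hwkqdef, abs_of_nonneg (mul_nonneg h1 h3.1)]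
    nlinarith [h3.1, h3.2]
  have hwk1qm : Measurable wk1q :=
    (hkm.comp hmaxm).mul (measurable_const.sub (hqm.comp hmaxm))
  have hwk1qb : ∀ θ, |wk1q θ| ≤ Ck := by
    intro θ
    have h1 := hknn _ (hmaxnn θ); have h2 := hCk _ (hmaxnn θ); have h3 := hqb _ (hmaxnn θ)
    rw [hwk1qdef, abs_of_nonneg (mul_nonneg h1 (by linarith [h3.2]))]
    nlinarith [h3.1, h3.2]
  have hwAξm : Measurable wAξ := (hγAm.comp hmaxm).mul (hξm.comp hmaxm)
  have hwAξb : ∀ θ, |wAξ θ| ≤ CγA := by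
    intro θ
    have h1 := hγAnn _ (hmaxnn θ); have h2 := hCγA _ (hmaxnn θ); have h3 := hξb _ (hmaxnn θ)
    rw [hwAξdef, abs_of_nonneg (mul_nonneg h1 h3.1)]
    nlinarith [h3.1, h3.2]
  have hwχm : Measurable wχ := (hχm.comp hmaxm).mul (measurable_const.sub (hξm.comp hmaxm))
  have hwχb : ∀ θ, |wχ θ| ≤ Cχ := by
    intro θ
    have h1 := hχnn _ (hmaxnn θ); have h2 := hCχ _ (hmaxnn θ); have h3 := hξb _ (hmaxnn θ)
    rw [hwχdef, abs_of_nonneg (mul_nonneg h1 (by linarith [h3.2]))]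
    nlinarith [h3.1, h3.2]
  have hwγIm : Measurable wγI := hγIm.comp hmaxm
  have hwγIb : ∀ θ, |wγI θ| ≤ CγI := by
    intro θ
    have h1 := hγInn _ (hmaxnn θ); have h2 := hCγI _ (hmaxnn θ)
    rw [hwγIdef, abs_of_nonneg h1]; exact h2
  have hmEb : ∀ θ, |mE θ| ≤ Ck + μ := fun θ => by
    rw [abs_of_nonneg (hKE.nn θ)]; exact hKE.le θ
  have hmAb : ∀ θ, |mA θ| ≤ CγA + Cχ + μ := fun θ => by
    rw [abs_of_nonneg (hKA.nn θ)]; exact hKA.le θ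
  have hmIb : ∀ θ, |mI θ| ≤ CγI + μ := fun θ => by
    rw [abs_of_nonneg (hKI.nn θ)]; exact hKI.le θ
  -- measurable representatives of initial data
  set e0' : ℝ → ℝ := he0.1.mk e0 with he0'def
  have he0'm : Measurable e0' := he0.1.stronglyMeasurable_mk.measurable
  have hee : e0 =ᵐ[volume.restrict (Set.Ioi (0:ℝ))] e0' := he0.1.ae_eq_mk
  have he0' : IntegrableOn e0' (Set.Ioi 0) := he0.congr hee
  set a0' : ℝ → ℝ := ha0.1.mk a0 with ha0'def
  have ha0'm : Measurable a0' := ha0.1.stronglyMeasurable_mk.measurable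
  have haa : a0 =ᵐ[volume.restrict (Set.Ioi (0:ℝ))] a0' := ha0.1.ae_eq_mk
  have ha0' : IntegrableOn a0' (Set.Ioi 0) := ha0.congr haa
  set i0' : ℝ → ℝ := hi0.1.mk i0 with hi0'def
  have hi0'm : Measurable i0' := hi0.1.stronglyMeasurable_mk.measurable
  have hii : i0 =ᵐ[volume.restrict (Set.Ioi (0:ℝ))] i0' := hi0.1.ae_eq_mk
  have hi0' : IntegrableOn i0' (Set.Ioi 0) := hi0.congr hii
  -- S and V representations
  set βe : ℝ → ℝ := fun u => β (max u 0) with hβedef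
  have hβec : Continuous βe := hβc.comp_continuous hmaxc (fun u => hmaxnn u)
  set hS' : ℝ → ℝ := fun u => p + βe u + μ with hSdef'
  set hV' : ℝ → ℝ := fun u => ζ * ε + βe u * (1 - ε) + μ with hVdef'
  have hSc' : Continuous hS' := (continuous_const.add hβec).add continuous_const
  have hVc' : Continuous hV' := (continuous_const.add (hβec.mul continuous_const)).add
    continuous_const
  set SS : ℝ → ℝ := fun t => Real.exp (-(∫ v in (0:ℝ)..t, hS' v)) *
    (S0 + ∫ s in (0:ℝ)..t, (μ * N0) * Real.exp (∫ v in (0:ℝ)..s, hS' v)) with hSSdef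
  have hSScont : Continuous SS := by
    have hprim : Continuous fun u => ∫ v in (0:ℝ)..u, hS' v :=
      intervalIntegral.continuous_primitive (fun a b => hSc'.intervalIntegrable a b) 0
    exact (Real.continuous_exp.comp hprim.neg).mul (continuous_const.add
      (intervalIntegral.continuous_primitive (fun a b =>
        ((continuous_const.mul (Real.continuous_exp.comp hprim)).intervalIntegrable a b)) 0))
  set VV : ℝ → ℝ := fun t => Real.exp (-(∫ v in (0:ℝ)..t, hV' v)) *
    (V0 + ∫ s in (0:ℝ)..t, (p * SS s) * Real.exp (∫ v in (0:ℝ)..s, hV' v)) with hVVdef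
  have hVVcont : Continuous VV := by
    have hprim : Continuous fun u => ∫ v in (0:ℝ)..u, hV' v :=
      intervalIntegral.continuous_primitive (fun a b => hVc'.intervalIntegrable a b) 0
    exact (Real.continuous_exp.comp hprim.neg).mul (continuous_const.add
      (intervalIntegral.continuous_primitive (fun a b =>
        (((continuous_const.mul hSScont).mul
          (Real.continuous_exp.comp hprim)).intervalIntegrable a b)) 0))
  have hSrep : ∀ t : ℝ, 0 ≤ t → Ssol μ N0 p S0 β t = SS t := by
    intro t ht
    have hHsub : ∀ s : ℝ, 0 ≤ s → s ≤ t →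
        (∫ τ in s..t, (p + β τ + μ)) =
          (∫ v in (0:ℝ)..t, hS' v) - ∫ v in (0:ℝ)..s, hS' v := by
      intro s hs hst
      rw [intervalIntegral.integral_interval_sub_left (hSc'.intervalIntegrable 0 t)
        (hSc'.intervalIntegrable 0 s)]
      refine (intervalIntegral.integral_congr fun τ hτ => ?_).symm
      rw [Set.uIcc_of_le hst] at hτ
      simp only [hSdef', hβedef, hmax_eq τ (le_trans hs hτ.1)]
    rw [Ssol]
    simp only [hSSdef]
    have h0 : (∫ s in (0:ℝ)..t, (p + β s + μ)) = ∫ v in (0:ℝ)..t, hS' v := by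
      have := hHsub 0 le_rfl ht
      simpa using this
    rw [h0]
    have h1 : (∫ s in (0:ℝ)..t, Real.exp (-(∫ τ in s..t, (p + β τ + μ)))) =
        Real.exp (-(∫ v in (0:ℝ)..t, hS' v)) *
          ∫ s in (0:ℝ)..t, Real.exp (∫ v in (0:ℝ)..s, hS' v) := by
      rw [← intervalIntegral.integral_const_mul]
      refine intervalIntegral.integral_congr fun s hs => ?_
      rw [Set.uIcc_of_le ht] at hs
      rw [hHsub s hs.1 hs.2, neg_sub, Real.exp_sub, Real.exp_neg]
      field_simp
    rw [h1, intervalIntegral.integral_const_mul]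
    ring
  have hVrep : ∀ t : ℝ, 0 ≤ t → Vsol μ N0 p ζ ε S0 V0 β t = VV t := by
    intro t ht
    have hHsub : ∀ s : ℝ, 0 ≤ s → s ≤ t →
        (∫ τ in s..t, (ζ * ε + β τ * (1 - ε) + μ)) =
          (∫ v in (0:ℝ)..t, hV' v) - ∫ v in (0:ℝ)..s, hV' v := by
      intro s hs hst
      rw [intervalIntegral.integral_interval_sub_left (hVc'.intervalIntegrable 0 t)
        (hVc'.intervalIntegrable 0 s)]
      refine (intervalIntegral.integral_congr fun τ hτ => ?_).symm
      rw [Set.uIcc_of_le hst] at hτ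
      simp only [hVdef', hβedef, hmax_eq τ (le_trans hs hτ.1)]
    rw [Vsol]
    simp only [hVVdef]
    have h0 : (∫ s in (0:ℝ)..t, (ζ * ε + β s * (1 - ε) + μ)) = ∫ v in (0:ℝ)..t, hV' v := by
      have := hHsub 0 le_rfl ht
      simpa using this
    rw [h0]
    have h1 : (∫ s in (0:ℝ)..t, Ssol μ N0 p S0 β s *
          Real.exp (-(∫ τ in s..t, (ζ * ε + β τ * (1 - ε) + μ)))) =
        Real.exp (-(∫ v in (0:ℝ)..t, hV' v)) *
          ∫ s in (0:ℝ)..t, SS s * Real.exp (∫ v in (0:ℝ)..s, hV' v) := by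
      rw [← intervalIntegral.integral_const_mul]
      refine intervalIntegral.integral_congr fun s hs => ?_
      rw [Set.uIcc_of_le ht] at hs
      rw [hHsub s hs.1 hs.2, neg_sub, Real.exp_sub, Real.exp_neg, hSrep s hs.1]
      field_simp
    have h2 : (∫ s in (0:ℝ)..t, (p * SS s) * Real.exp (∫ v in (0:ℝ)..s, hV' v)) =
        p * ∫ s in (0:ℝ)..t, SS s * Real.exp (∫ v in (0:ℝ)..s, hV' v) := by
      rw [← intervalIntegral.integral_const_mul]
      exact intervalIntegral.integral_congr fun s _ => by ring
    rw [h1, h2]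
    ring
  -- boundary data
  set gE : ℝ → ℝ := fun u => βe u * (SS u + (1 - ε) * VV u) with hgEdef
  have hgEc : Continuous gE := hβec.mul (hSScont.add (continuous_const.mul hVVcont))
  set gA : ℝ → ℝ := fun u => α (max u 0) with hgAdef
  have hgAc : Continuous gA := hαc.comp_continuous hmaxc hmaxnn
  set gI : ℝ → ℝ := fun u => ι (max u 0) with hgIdef
  have hgIc : Continuous gI := hιc.comp_continuous hmaxc hmaxnn
  have hgEeq : ∀ u : ℝ, 0 ≤ u → epsTilde μ N0 p ζ ε S0 V0 β u = gE u := by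
    intro u hu
    rw [epsTilde, hSrep u hu, hVrep u hu]
    simp only [hgEdef, hβedef, hmax_eq u hu]
  have hgAeq : ∀ u : ℝ, 0 ≤ u → α u = gA u := fun u hu => by
    simp only [hgAdef, hmax_eq u hu]
  have hgIeq : ∀ u : ℝ, 0 ≤ u → ι u = gI u := fun u hu => by
    simp only [hgIdef, hmax_eq u hu]
  -- transfers
  have hEtrans : ∀ t : ℝ, 0 ≤ t →
      (fun θ => e t θ) =ᵐ[volume.restrict (Set.Ioi (0:ℝ))]
        fun θ => dens (pim mE) e0' gE t θ := by
    intro t ht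
    rw [he]
    exact dens_transfer hpiE hee hgEeq ht
  have hAtrans : ∀ t : ℝ, 0 ≤ t →
      (fun θ => a t θ) =ᵐ[volume.restrict (Set.Ioi (0:ℝ))]
        fun θ => dens (pim mA) a0' gA t θ := by
    intro t ht
    rw [ha]
    exact dens_transfer hpiA haa hgAeq ht
  have hItrans : ∀ t : ℝ, 0 ≤ t →
      (fun θ => i t θ) =ᵐ[volume.restrict (Set.Ioi (0:ℝ))]
        fun θ => dens (pim mI) i0' gI t θ := by
    intro t ht
    rw [hi]
    exact dens_transfer hpiI hii hgIeq ht
  -- Volterra boundary identities in normalized form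
  have hαD : ∀ u : ℝ, 0 ≤ u →
      α u = ∫ θ in Set.Ioi (0:ℝ), wkq θ * dens (pim mE) e0' gE u θ := by
    intro u hu
    have hsplit := dens_split (w := wkq) hKE hwkqm hwkqb he0'm he0' hgEc hu
    rw [(hVolt u hu).2.1, hsplit, add_comm]
    congr 1
    · refine integral_congr_ae ?_
      have hmem : ∀ᵐ s ∂volume.restrict (Set.Ioi (0:ℝ)), s ∈ Set.Ioi (0:ℝ) :=
        ae_restrict_mem measurableSet_Ioi
      filter_upwards [hee, hmem] with s hs hs0
      rw [hpiE (u + s) (by linarith [hs0.out]), hpiE s hs0.out.le, hs]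
      simp only [hwkqdef, hmax_eq (u + s) (by linarith [hs0.out])]
      ring
    · refine intervalIntegral.integral_congr fun s hs => ?_
      rw [Set.uIcc_of_le hu] at hs
      rw [hpiE (u - s) (by linarith [hs.2]), hSrep s hs.1, hVrep s hs.1]
      simp only [hwkqdef, hgEdef, hβedef, hmax_eq (u - s) (by linarith [hs.2]),
        hmax_eq s hs.1]
      ring
  have hιD : ∀ u : ℝ, 0 ≤ u →
      ι u = (∫ θ in Set.Ioi (0:ℝ), wk1q θ * dens (pim mE) e0' gE u θ) +
        ∫ θ in Set.Ioi (0:ℝ), wχ θ * dens (pim mA) a0' gA u θ := by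
    intro u hu
    have hsplitE := dens_split (w := wk1q) hKE hwk1qm hwk1qb he0'm he0' hgEc hu
    have hsplitA := dens_split (w := wχ) hKA hwχm hwχb ha0'm ha0' hgAc hu
    have hIval : (∫ s in (0:ℝ)..u,
        (k (u - s) * (1 - q (u - s)) * β s *
            (Ssol μ N0 p S0 β s + (1 - ε) * Vsol μ N0 p ζ ε S0 V0 β s) * piE μ k (u - s) +
          χ (u - s) * (1 - ξ (u - s)) * α s * piA μ γA ξ χ (u - s))) =
        (∫ s in (0:ℝ)..u, wk1q (u - s) * (gE s * pim mE (u - s))) +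
          ∫ s in (0:ℝ)..u, wχ (u - s) * (gA s * pim mA (u - s)) := by
      rw [← intervalIntegral.integral_add (conv_intInt hKE hwk1qm hwk1qb hgEc hu)
        (conv_intInt hKA hwχm hwχb hgAc hu)]
      refine intervalIntegral.integral_congr fun s hs => ?_
      rw [Set.uIcc_of_le hu] at hs
      rw [hpiE (u - s) (by linarith [hs.2]), hpiA (u - s) (by linarith [hs.2]),
        hSrep s hs.1, hVrep s hs.1, hgAeq s hs.1]
      simp only [hwk1qdef, hwχdef, hgEdef, hgAdef, hβedef,
        hmax_eq (u - s) (by linarith [hs.2]), hmax_eq s hs.1]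
      ring
    have hIoi : (∫ s in Set.Ioi (0:ℝ),
        (k (u + s) * (1 - q (u + s)) * e0 s * piE μ k (u + s) / piE μ k s +
          χ (u + s) * (1 - ξ (u + s)) * a0 s * piA μ γA ξ χ (u + s) / piA μ γA ξ χ s)) =
        (∫ s in Set.Ioi (0:ℝ), wk1q (u + s) * (e0' s * (pim mE (u + s) / pim mE s))) +
          ∫ s in Set.Ioi (0:ℝ), wχ (u + s) * (a0' s * (pim mA (u + s) / pim mA s)) := by
      rw [← integral_add (shift_integrableOn hKE hwk1qm hwk1qb he0'm he0' hu)
        (shift_integrableOn hKA hwχm hwχb ha0'm ha0' hu)]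
      refine integral_congr_ae ?_
      have hmem : ∀ᵐ s ∂volume.restrict (Set.Ioi (0:ℝ)), s ∈ Set.Ioi (0:ℝ) :=
        ae_restrict_mem measurableSet_Ioi
      filter_upwards [hee, haa, hmem] with s hs1 hs2 hs0
      rw [hpiE (u + s) (by linarith [hs0.out]), hpiE s hs0.out.le,
        hpiA (u + s) (by linarith [hs0.out]), hpiA s hs0.out.le, hs1, hs2]
      simp only [hwk1qdef, hwχdef, hmax_eq (u + s) (by linarith [hs0.out])]
      ring
    rw [(hVolt u hu).2.2, hIval, hIoi, hsplitE, hsplitA]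
    ring
  -- splitting the kernel-weighted integrals
  have hμb : ∀ _θ : ℝ, |(fun _ : ℝ => μ) _θ| ≤ μ := fun _ => by
    rw [abs_of_nonneg hμ.le]
  have hDmE : ∀ u : ℝ, 0 ≤ u →
      (∫ θ in Set.Ioi (0:ℝ), mE θ * dens (pim mE) e0' gE u θ) =
        (∫ θ in Set.Ioi (0:ℝ), wkq θ * dens (pim mE) e0' gE u θ) +
        (∫ θ in Set.Ioi (0:ℝ), wk1q θ * dens (pim mE) e0' gE u θ) +
        μ * ∫ θ in Set.Ioi (0:ℝ), dens (pim mE) e0' gE u θ := by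
    intro u hu
    have hint1 := dens_int hKE hwkqm hwkqb he0'm he0' hgEc hu
    have hint2 := dens_int hKE hwk1qm hwk1qb he0'm he0' hgEc hu
    have hint3 := dens_int (w := fun _ => μ) hKE measurable_const hμb he0'm he0' hgEc hu
    have hint12 : IntegrableOn (fun θ => wkq θ * dens (pim mE) e0' gE u θ +
        wk1q θ * dens (pim mE) e0' gE u θ) (Set.Ioi 0) := hint1.add hint2
    calc (∫ θ in Set.Ioi (0:ℝ), mE θ * dens (pim mE) e0' gE u θ)
        = ∫ θ in Set.Ioi (0:ℝ), ((wkq θ * dens (pim mE) e0' gE u θ +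
            wk1q θ * dens (pim mE) e0' gE u θ) + μ * dens (pim mE) e0' gE u θ) := by
          refine setIntegral_congr_fun measurableSet_Ioi (fun θ _ => ?_)
          simp only [hmEdef, hwkqdef, hwk1qdef]
          ring
      _ = _ := by
          rw [integral_add hint12 hint3, integral_add hint1 hint2,
            MeasureTheory.integral_const_mul]
  have hDmA : ∀ u : ℝ, 0 ≤ u →
      (∫ θ in Set.Ioi (0:ℝ), mA θ * dens (pim mA) a0' gA u θ) =
        (∫ θ in Set.Ioi (0:ℝ), wAξ θ * dens (pim mA) a0' gA u θ) +
        (∫ θ in Set.Ioi (0:ℝ), wχ θ * dens (pim mA) a0' gA u θ) +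
        μ * ∫ θ in Set.Ioi (0:ℝ), dens (pim mA) a0' gA u θ := by
    intro u hu
    have hint1 := dens_int hKA hwAξm hwAξb ha0'm ha0' hgAc hu
    have hint2 := dens_int hKA hwχm hwχb ha0'm ha0' hgAc hu
    have hint3 := dens_int (w := fun _ => μ) hKA measurable_const hμb ha0'm ha0' hgAc hu
    have hint12 : IntegrableOn (fun θ => wAξ θ * dens (pim mA) a0' gA u θ +
        wχ θ * dens (pim mA) a0' gA u θ) (Set.Ioi 0) := hint1.add hint2
    calc (∫ θ in Set.Ioi (0:ℝ), mA θ * dens (pim mA) a0' gA u θ)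
        = ∫ θ in Set.Ioi (0:ℝ), ((wAξ θ * dens (pim mA) a0' gA u θ +
            wχ θ * dens (pim mA) a0' gA u θ) + μ * dens (pim mA) a0' gA u θ) := by
          refine setIntegral_congr_fun measurableSet_Ioi (fun θ _ => ?_)
          simp only [hmAdef, hwAξdef, hwχdef]
          ring
      _ = _ := by
          rw [integral_add hint12 hint3, integral_add hint1 hint2,
            MeasureTheory.integral_const_mul]
  have hDmI : ∀ u : ℝ, 0 ≤ u →
      (∫ θ in Set.Ioi (0:ℝ), mI θ * dens (pim mI) i0' gI u θ) =
        (∫ θ in Set.Ioi (0:ℝ), wγI θ * dens (pim mI) i0' gI u θ) +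
        μ * ∫ θ in Set.Ioi (0:ℝ), dens (pim mI) i0' gI u θ := by
    intro u hu
    have hint1 := dens_int hKI hwγIm hwγIb hi0'm hi0' hgIc hu
    have hint3 := dens_int (w := fun _ => μ) hKI measurable_const hμb hi0'm hi0' hgIc hu
    calc (∫ θ in Set.Ioi (0:ℝ), mI θ * dens (pim mI) i0' gI u θ)
        = ∫ θ in Set.Ioi (0:ℝ), (wγI θ * dens (pim mI) i0' gI u θ +
            μ * dens (pim mI) i0' gI u θ) := by
          refine setIntegral_congr_fun measurableSet_Ioi (fun θ _ => ?_)
          simp only [hmIdef, hwγIdef]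
          ring
      _ = _ := by
          rw [integral_add hint1 hint3, MeasureTheory.integral_const_mul]
  -- the recovery source term
  have hJ : ∀ u : ℝ, 0 ≤ u →
      (∫ θ in Set.Ioi (0:ℝ), (γA θ * ξ θ * a u θ + γI θ * i u θ)) =
        (∫ θ in Set.Ioi (0:ℝ), wAξ θ * dens (pim mA) a0' gA u θ) +
        ∫ θ in Set.Ioi (0:ℝ), wγI θ * dens (pim mI) i0' gI u θ := by
    intro u hu
    have hintA := dens_int hKA hwAξm hwAξb ha0'm ha0' hgAc hu
    have hintI := dens_int hKI hwγIm hwγIb hi0'm hi0' hgIc hu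
    rw [← integral_add hintA hintI]
    refine integral_congr_ae ?_
    have hmem : ∀ᵐ θ ∂volume.restrict (Set.Ioi (0:ℝ)), θ ∈ Set.Ioi (0:ℝ) :=
      ae_restrict_mem measurableSet_Ioi
    filter_upwards [hAtrans u hu, hItrans u hu, hmem] with θ hθ1 hθ2 hθ0
    rw [hθ1, hθ2]
    simp only [hwAξdef, hwγIdef, hmax_eq θ hθ0.out.le]
  -- matches of the density integrals
  have hEmatch : ∀ u : ℝ, 0 ≤ u → (∫ θ in Set.Ioi (0:ℝ), e u θ) =
      ∫ θ in Set.Ioi (0:ℝ), dens (pim mE) e0' gE u θ := fun u hu =>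
    integral_congr_ae (hEtrans u hu)
  have hAmatch : ∀ u : ℝ, 0 ≤ u → (∫ θ in Set.Ioi (0:ℝ), a u θ) =
      ∫ θ in Set.Ioi (0:ℝ), dens (pim mA) a0' gA u θ := fun u hu =>
    integral_congr_ae (hAtrans u hu)
  have hImatch : ∀ u : ℝ, 0 ≤ u → (∫ θ in Set.Ioi (0:ℝ), i u θ) =
      ∫ θ in Set.Ioi (0:ℝ), dens (pim mI) i0' gI u θ := fun u hu =>
    integral_congr_ae (hItrans u hu)
  -- evolution identities
  have hEevol : ∀ T : ℝ, 0 ≤ T →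
      (∫ θ in Set.Ioi (0:ℝ), dens (pim mE) e0' gE T θ) =
        (∫ θ in Set.Ioi (0:ℝ), e0' θ) + ∫ u in (0:ℝ)..T,
          (gE u - ∫ θ in Set.Ioi (0:ℝ), mE θ * dens (pim mE) e0' gE u θ) := fun T hT =>
    dens_evolution hKE he0'm he0' hgEc hT
  have hAevol : ∀ T : ℝ, 0 ≤ T →
      (∫ θ in Set.Ioi (0:ℝ), dens (pim mA) a0' gA T θ) =
        (∫ θ in Set.Ioi (0:ℝ), a0' θ) + ∫ u in (0:ℝ)..T,
          (gA u - ∫ θ in Set.Ioi (0:ℝ), mA θ * dens (pim mA) a0' gA u θ) := fun T hT =>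
    dens_evolution hKA ha0'm ha0' hgAc hT
  have hIevol : ∀ T : ℝ, 0 ≤ T →
      (∫ θ in Set.Ioi (0:ℝ), dens (pim mI) i0' gI T θ) =
        (∫ θ in Set.Ioi (0:ℝ), i0' θ) + ∫ u in (0:ℝ)..T,
          (gI u - ∫ θ in Set.Ioi (0:ℝ), mI θ * dens (pim mI) i0' gI u θ) := fun T hT =>
    dens_evolution hKI hi0'm hi0' hgIc hT
  -- S and V integral equations
  have hSint : ∀ T : ℝ, SS T = S0 + ∫ u in (0:ℝ)..T, (μ * N0 - hS' u * SS u) := by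
    intro T
    have := VoC_integral hSc' (continuous_const : Continuous fun _ : ℝ => μ * N0) S0 T
    simpa only [hSSdef] using this
  have hVint : ∀ T : ℝ, VV T = V0 + ∫ u in (0:ℝ)..T, (p * SS u - hV' u * VV u) := by
    intro T
    have := VoC_integral (q := fun s => p * SS s) hVc' (continuous_const.mul hSScont :
      Continuous fun s : ℝ => p * SS s) V0 T
    simpa only [hVVdef] using this
  -- R integral equation
  have hRcont : ContinuousOn R (Set.Ici 0) := fun u hu => (hR' u hu).continuousWithinAt
  have hRii : ∀ T : ℝ, 0 ≤ T → IntervalIntegrable R volume 0 T := by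
    intro T hT
    refine ContinuousOn.intervalIntegrable ?_
    rw [Set.uIcc_of_le hT]
    exact hRcont.mono (fun y hy => hy.1)
  have hcanonInt : ∀ T : ℝ, 0 ≤ T → IntervalIntegrable (fun u => ζ * ε * VV u +
      ((∫ θ in Set.Ioi (0:ℝ), wAξ θ * dens (pim mA) a0' gA u θ) +
        ∫ θ in Set.Ioi (0:ℝ), wγI θ * dens (pim mI) i0' gI u θ) - μ * R u) volume 0 T := by
    intro T hT
    refine IntervalIntegrable.sub (IntervalIntegrable.add
      ((continuous_const.mul hVVcont).intervalIntegrable 0 T)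
      ((Dw_intervalIntegrable hKA hwAξm hwAξb ha0'm ha0' hgAc hT).add
        (Dw_intervalIntegrable hKI hwγIm hwγIb hi0'm hi0' hgIc hT))) ?_
    exact (hRii T hT).const_mul μ
  have hRpt : ∀ u : ℝ, 0 ≤ u → ζ * ε * V u +
      (∫ θ in Set.Ioi (0:ℝ), (γA θ * ξ θ * a u θ + γI θ * i u θ)) - μ * R u =
      ζ * ε * VV u + ((∫ θ in Set.Ioi (0:ℝ), wAξ θ * dens (pim mA) a0' gA u θ) +
        ∫ θ in Set.Ioi (0:ℝ), wγI θ * dens (pim mI) i0' gI u θ) - μ * R u := by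
    intro u hu
    rw [hV, hVrep u hu, hJ u hu]
  have hRint : ∀ T : ℝ, 0 ≤ T → R T = Rinit + ∫ u in (0:ℝ)..T,
      (ζ * ε * VV u + ((∫ θ in Set.Ioi (0:ℝ), wAξ θ * dens (pim mA) a0' gA u θ) +
        ∫ θ in Set.Ioi (0:ℝ), wγI θ * dens (pim mI) i0' gI u θ) - μ * R u) := by
    intro T hT
    have hRderInt : IntervalIntegrable (fun u => ζ * ε * V u +
        (∫ θ in Set.Ioi (0:ℝ), (γA θ * ξ θ * a u θ + γI θ * i u θ)) - μ * R u)
        volume 0 T := by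
      have h1 := hcanonInt T hT
      rw [intervalIntegrable_iff, Set.uIoc_of_le hT] at h1 ⊢
      exact h1.congr ((ae_restrict_iff' measurableSet_Ioc).2
        (ae_of_all _ fun u hu => (hRpt u hu.1.le).symm))
    have hftc := intervalIntegral.integral_eq_sub_of_hasDeriv_right_of_le hT
      (hRcont.mono (fun y hy => hy.1))
      (fun x hx => (hR' x hx.1.le).mono (fun y hy => le_trans hx.1.le (le_of_lt hy)))
      hRderInt
    have hcongr : (∫ u in (0:ℝ)..T,
        (ζ * ε * VV u + ((∫ θ in Set.Ioi (0:ℝ), wAξ θ * dens (pim mA) a0' gA u θ) +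
          ∫ θ in Set.Ioi (0:ℝ), wγI θ * dens (pim mI) i0' gI u θ) - μ * R u)) =
        ∫ u in (0:ℝ)..T, (ζ * ε * V u +
          (∫ θ in Set.Ioi (0:ℝ), (γA θ * ξ θ * a u θ + γI θ * i u θ)) - μ * R u) := by
      refine intervalIntegral.integral_congr fun u hu => ?_
      rw [Set.uIcc_of_le hT] at hu
      exact (hRpt u hu.1).symm
    rw [hcongr, hftc, hR0]
    ring
  -- the grand identity
  have hconst : S0 + V0 + (∫ θ in Set.Ioi (0:ℝ), e0' θ) + (∫ θ in Set.Ioi (0:ℝ), a0' θ) +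
      (∫ θ in Set.Ioi (0:ℝ), i0' θ) + Rinit = N0 := by
    have h1 : (∫ θ in Set.Ioi (0:ℝ), e0' θ) = ∫ θ in Set.Ioi (0:ℝ), e0 θ :=
      integral_congr_ae hee.symm
    have h2 : (∫ θ in Set.Ioi (0:ℝ), a0' θ) = ∫ θ in Set.Ioi (0:ℝ), a0 θ :=
      integral_congr_ae haa.symm
    have h3 : (∫ θ in Set.Ioi (0:ℝ), i0' θ) = ∫ θ in Set.Ioi (0:ℝ), i0 θ :=
      integral_congr_ae hii.symm
    rw [h1, h2, h3, hN0eq]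
  have hNNid : ∀ T : ℝ, 0 ≤ T →
      SS T + VV T + (∫ θ in Set.Ioi (0:ℝ), dens (pim mE) e0' gE T θ) +
        (∫ θ in Set.Ioi (0:ℝ), dens (pim mA) a0' gA T θ) +
        (∫ θ in Set.Ioi (0:ℝ), dens (pim mI) i0' gI T θ) + R T =
      N0 + ∫ u in (0:ℝ)..T, (μ * N0 - μ *
        (SS u + VV u + (∫ θ in Set.Ioi (0:ℝ), dens (pim mE) e0' gE u θ) +
          (∫ θ in Set.Ioi (0:ℝ), dens (pim mA) a0' gA u θ) +
          (∫ θ in Set.Ioi (0:ℝ), dens (pim mI) i0' gI u θ) + R u)) := by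
    intro T hT
    have iS : IntervalIntegrable (fun u => μ * N0 - hS' u * SS u) volume 0 T :=
      (continuous_const.sub (hSc'.mul hSScont)).intervalIntegrable 0 T
    have iV : IntervalIntegrable (fun u => p * SS u - hV' u * VV u) volume 0 T :=
      ((continuous_const.mul hSScont).sub (hVc'.mul hVVcont)).intervalIntegrable 0 T
    have iE : IntervalIntegrable (fun u => gE u -
        ∫ θ in Set.Ioi (0:ℝ), mE θ * dens (pim mE) e0' gE u θ) volume 0 T :=
      (hgEc.intervalIntegrable 0 T).sub
        (Dw_intervalIntegrable (w := mE) hKE hKE.meas hmEb he0'm he0' hgEc hT)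
    have iA : IntervalIntegrable (fun u => gA u -
        ∫ θ in Set.Ioi (0:ℝ), mA θ * dens (pim mA) a0' gA u θ) volume 0 T :=
      (hgAc.intervalIntegrable 0 T).sub
        (Dw_intervalIntegrable (w := mA) hKA hKA.meas hmAb ha0'm ha0' hgAc hT)
    have iI : IntervalIntegrable (fun u => gI u -
        ∫ θ in Set.Ioi (0:ℝ), mI θ * dens (pim mI) i0' gI u θ) volume 0 T :=
      (hgIc.intervalIntegrable 0 T).sub
        (Dw_intervalIntegrable (w := mI) hKI hKI.meas hmIb hi0'm hi0' hgIc hT)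
    have iR := hcanonInt T hT
    have hsum6 : (∫ u in (0:ℝ)..T, (μ * N0 - hS' u * SS u)) +
        (∫ u in (0:ℝ)..T, (p * SS u - hV' u * VV u)) +
        (∫ u in (0:ℝ)..T, (gE u - ∫ θ in Set.Ioi (0:ℝ), mE θ * dens (pim mE) e0' gE u θ)) +
        (∫ u in (0:ℝ)..T, (gA u - ∫ θ in Set.Ioi (0:ℝ), mA θ * dens (pim mA) a0' gA u θ)) +
        (∫ u in (0:ℝ)..T, (gI u - ∫ θ in Set.Ioi (0:ℝ), mI θ * dens (pim mI) i0' gI u θ)) +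
        (∫ u in (0:ℝ)..T, (ζ * ε * VV u +
          ((∫ θ in Set.Ioi (0:ℝ), wAξ θ * dens (pim mA) a0' gA u θ) +
            ∫ θ in Set.Ioi (0:ℝ), wγI θ * dens (pim mI) i0' gI u θ) - μ * R u)) =
        ∫ u in (0:ℝ)..T, (μ * N0 - μ *
          (SS u + VV u + (∫ θ in Set.Ioi (0:ℝ), dens (pim mE) e0' gE u θ) +
            (∫ θ in Set.Ioi (0:ℝ), dens (pim mA) a0' gA u θ) +
            (∫ θ in Set.Ioi (0:ℝ), dens (pim mI) i0' gI u θ) + R u)) := by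
      rw [← intervalIntegral.integral_add iS iV,
        ← intervalIntegral.integral_add (iS.add iV) iE,
        ← intervalIntegral.integral_add ((iS.add iV).add iE) iA,
        ← intervalIntegral.integral_add (((iS.add iV).add iE).add iA) iI,
        ← intervalIntegral.integral_add ((((iS.add iV).add iE).add iA).add iI) iR]
      refine intervalIntegral.integral_congr fun u hu => ?_
      rw [Set.uIcc_of_le hT] at hu
      have e1 : gA u = ∫ θ in Set.Ioi (0:ℝ), wkq θ * dens (pim mE) e0' gE u θ := by
        rw [← hgAeq u hu.1]; exact hαD u hu.1
      have e2 : gI u = (∫ θ in Set.Ioi (0:ℝ), wk1q θ * dens (pim mE) e0' gE u θ) +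
          ∫ θ in Set.Ioi (0:ℝ), wχ θ * dens (pim mA) a0' gA u θ := by
        rw [← hgIeq u hu.1]; exact hιD u hu.1
      rw [hDmE u hu.1, hDmA u hu.1, hDmI u hu.1, e1, e2]
      simp only [hgEdef, hSdef', hVdef']
      ring
    rw [hSint T, hVint T, hEevol T hT, hAevol T hT, hIevol T hT, hRint T hT]
    calc (S0 + ∫ u in (0:ℝ)..T, (μ * N0 - hS' u * SS u)) +
          (V0 + ∫ u in (0:ℝ)..T, (p * SS u - hV' u * VV u)) +
          ((∫ θ in Set.Ioi (0:ℝ), e0' θ) + ∫ u in (0:ℝ)..T,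
            (gE u - ∫ θ in Set.Ioi (0:ℝ), mE θ * dens (pim mE) e0' gE u θ)) +
          ((∫ θ in Set.Ioi (0:ℝ), a0' θ) + ∫ u in (0:ℝ)..T,
            (gA u - ∫ θ in Set.Ioi (0:ℝ), mA θ * dens (pim mA) a0' gA u θ)) +
          ((∫ θ in Set.Ioi (0:ℝ), i0' θ) + ∫ u in (0:ℝ)..T,
            (gI u - ∫ θ in Set.Ioi (0:ℝ), mI θ * dens (pim mI) i0' gI u θ)) +
          (Rinit + ∫ u in (0:ℝ)..T, (ζ * ε * VV u +
            ((∫ θ in Set.Ioi (0:ℝ), wAξ θ * dens (pim mA) a0' gA u θ) +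
              ∫ θ in Set.Ioi (0:ℝ), wγI θ * dens (pim mI) i0' gI u θ) - μ * R u))
        = (S0 + V0 + (∫ θ in Set.Ioi (0:ℝ), e0' θ) + (∫ θ in Set.Ioi (0:ℝ), a0' θ) +
            (∫ θ in Set.Ioi (0:ℝ), i0' θ) + Rinit) +
          ((∫ u in (0:ℝ)..T, (μ * N0 - hS' u * SS u)) +
            (∫ u in (0:ℝ)..T, (p * SS u - hV' u * VV u)) +
            (∫ u in (0:ℝ)..T, (gE u - ∫ θ in Set.Ioi (0:ℝ),
              mE θ * dens (pim mE) e0' gE u θ)) +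
            (∫ u in (0:ℝ)..T, (gA u - ∫ θ in Set.Ioi (0:ℝ),
              mA θ * dens (pim mA) a0' gA u θ)) +
            (∫ u in (0:ℝ)..T, (gI u - ∫ θ in Set.Ioi (0:ℝ),
              mI θ * dens (pim mI) i0' gI u θ)) +
            (∫ u in (0:ℝ)..T, (ζ * ε * VV u +
              ((∫ θ in Set.Ioi (0:ℝ), wAξ θ * dens (pim mA) a0' gA u θ) +
                ∫ θ in Set.Ioi (0:ℝ), wγI θ * dens (pim mI) i0' gI u θ) - μ * R u))) := by
          ring
      _ = N0 + ∫ u in (0:ℝ)..T, (μ * N0 - μ *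
          (SS u + VV u + (∫ θ in Set.Ioi (0:ℝ), dens (pim mE) e0' gE u θ) +
            (∫ θ in Set.Ioi (0:ℝ), dens (pim mA) a0' gA u θ) +
            (∫ θ in Set.Ioi (0:ℝ), dens (pim mI) i0' gI u θ) + R u)) := by
          rw [hconst, hsum6]
  -- continuity of the total population
  have hNNc : ContinuousOn (fun u => SS u + VV u +
      (∫ θ in Set.Ioi (0:ℝ), dens (pim mE) e0' gE u θ) +
      (∫ θ in Set.Ioi (0:ℝ), dens (pim mA) a0' gA u θ) +
      (∫ θ in Set.Ioi (0:ℝ), dens (pim mI) i0' gI u θ) + R u) (Set.Ici 0) :=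
    ContinuousOn.add (ContinuousOn.add (ContinuousOn.add (ContinuousOn.add
      (ContinuousOn.add hSScont.continuousOn hVVcont.continuousOn)
      (dens_cont hKE he0'm he0' hgEc)) (dens_cont hKA ha0'm ha0' hgAc))
      (dens_cont hKI hi0'm hi0' hgIc)) hRcont
  set NN : ℝ → ℝ := fun u => SS u + VV u +
      (∫ θ in Set.Ioi (0:ℝ), dens (pim mE) e0' gE u θ) +
      (∫ θ in Set.Ioi (0:ℝ), dens (pim mA) a0' gA u θ) +
      (∫ θ in Set.Ioi (0:ℝ), dens (pim mI) i0' gI u θ) + R u with hNNdef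
  set NNb : ℝ → ℝ := fun u => NN (max u 0) with hNNbdef
  have hNNbc : Continuous NNb := hNNc.comp_continuous hmaxc hmaxnn
  have hW : ∀ u : ℝ, HasDerivAt (fun x => ∫ s in (0:ℝ)..x, (NNb s - N0)) (NNb u - N0) u := by
    intro u
    exact intervalIntegral.integral_hasDerivAt_right
      ((hNNbc.sub continuous_const).intervalIntegrable 0 u)
      (hNNbc.sub continuous_const).stronglyMeasurable.stronglyMeasurableAtFilter
      (hNNbc.sub continuous_const).continuousAt
  have hkey : ∀ u : ℝ, 0 ≤ u → NN u - N0 = -μ * ∫ s in (0:ℝ)..u, (NNb s - N0) := by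
    intro u hu
    have h1 := hNNid u hu
    have h2 : (∫ s in (0:ℝ)..u, (μ * N0 - μ * NN s)) =
        ∫ s in (0:ℝ)..u, (-μ) * (NNb s - N0) := by
      refine intervalIntegral.integral_congr fun s hs => ?_
      rw [Set.uIcc_of_le hu] at hs
      simp only [hNNbdef, hmax_eq s hs.1]
      ring
    rw [h2, intervalIntegral.integral_const_mul] at h1
    simp only [hNNdef] at h1 ⊢
    linarith [h1]
  have hNNconst : ∀ T : ℝ, 0 ≤ T → NN T = N0 := by
    intro T hT
    have hWcont : Continuous fun x => ∫ s in (0:ℝ)..x, (NNb s - N0) :=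
      intervalIntegral.continuous_primitive
        (fun a b => (hNNbc.sub continuous_const).intervalIntegrable a b) 0
    have hφ : ∀ u : ℝ, 0 ≤ u → HasDerivAt
        (fun x => (∫ s in (0:ℝ)..x, (NNb s - N0)) * Real.exp (μ * x)) 0 u := by
      intro u hu
      have hexp : HasDerivAt (fun x : ℝ => Real.exp (μ * x)) (Real.exp (μ * u) * μ) u := by
        have h3 : HasDerivAt (fun x : ℝ => μ * x) μ u := by
          simpa using (hasDerivAt_id u).const_mul μ
        exact h3.exp
      have hprod := (hW u).mul hexp
      have hval : (NNb u - N0) * Real.exp (μ * u) +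
          (∫ s in (0:ℝ)..u, (NNb s - N0)) * (Real.exp (μ * u) * μ) = 0 := by
        have h1 : NNb u = NN u := by simp only [hNNbdef, hmax_eq u hu]
        rw [h1, hkey u hu]
        ring
      rw [hval] at hprod
      exact hprod
    have hcont : ContinuousOn (fun x => (∫ s in (0:ℝ)..x, (NNb s - N0)) *
        Real.exp (μ * x)) (Set.Icc 0 T) :=
      (hWcont.mul (Real.continuous_exp.comp (continuous_const.mul continuous_id))).continuousOn
    have hzero := constant_of_has_deriv_right_zero hcont
      (fun x hx => (hφ x hx.1).hasDerivWithinAt) T ⟨hT, le_rfl⟩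
    have h0 : (∫ s in (0:ℝ)..(0:ℝ), (NNb s - N0)) * Real.exp (μ * 0) = 0 := by
      simp
    have hTT : (∫ s in (0:ℝ)..T, (NNb s - N0)) * Real.exp (μ * T) = 0 := by
      rw [hzero, h0]
    have hWT : (∫ s in (0:ℝ)..T, (NNb s - N0)) = 0 :=
      (mul_eq_zero.1 hTT).resolve_right (Real.exp_pos (μ * T)).ne'
    have := hkey T hT
    rw [hWT] at this
    linarith [this]
  intro t ht
  rw [hS, hSrep t ht, hV, hVrep t ht, hEmatch t ht, hAmatch t ht, hImatch t ht]
  exact hNNconst t ht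
end
end
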